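/- arXiv:2512.13805 — 8 statements merged into one kernel-verified Lean document; each statement's English description precedes it below -/
import Mathlib

section
/- Apolarity Lemma: Let f ∈ ℂ[x_0,…,x_n] be homogeneous of degree d, and let ℓ_1, …, ℓ_r be pairwise non-proportional nonzero linear forms. Then there exist scalars λ_1,…,λ_r ∈ ℂ with f = λ_1 ℓ_1^d + ⋯ + λ_r ℓ_r^d if and only if the homogeneous ideal I(𝕏) of the set of points 𝕏 = {[ℓ_1],…,[ℓ_r]} ⊆ ℙ^n is contained in the apolar ideal Ann(f). -/
open MvPolynomial

noncomputable def monoDeriv {n : ℕ} (m : Fin n →₀ ℕ) :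
    Module.End ℂ (MvPolynomial (Fin n) ℂ) :=
  ((List.finRange n).map
    (fun i => ((pderiv i : Derivation ℂ (MvPolynomial (Fin n) ℂ) (MvPolynomial (Fin n) ℂ)).toLinearMap) ^ (m i))).prod

/-- `apolarAct D f` is the result `D ⌟ f` of applying `D` to `f` as a
differential operator with constant coefficients (`X i` acts as `∂/∂x i`). -/
noncomputable def apolarAct {n : ℕ} (D f : MvPolynomial (Fin n) ℂ) : MvPolynomial (Fin n) ℂ :=
  ∑ m ∈ D.support, D.coeff m • monoDeriv m f

section Aux

variable {N : ℕ}

lemma degree_eq_sum_univ (m : Fin N →₀ ℕ) : m.degree = ∑ i, m i :=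
  Finset.sum_subset (Finset.subset_univ _)
    (fun i _ hi => Finsupp.notMem_support_iff.mp hi)

lemma homog_degree {F : MvPolynomial (Fin N) ℂ} {e : ℕ} (hF : F.IsHomogeneous e)
    {m : Fin N →₀ ℕ} (hm : m ∈ F.support) : m.degree = e := by
  rw [Finsupp.degree_eq_weight_one]
  exact hF (mem_support_iff.mp hm)

lemma pderiv_eq_C {ℓ : MvPolynomial (Fin N) ℂ} (h : ℓ.IsHomogeneous 1) (j : Fin N) :
    pderiv j ℓ = C (coeff (Finsupp.single j 1) ℓ) := by
  conv_lhs => rw [ℓ.as_sum]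
  rw [map_sum]
  rw [Finset.sum_eq_single (Finsupp.single j 1)]
  · simp [pderiv_monomial]
  · intro k hk hkj
    have hdeg : k.degree = 1 := homog_degree h hk
    rw [pderiv_monomial]
    have hsum : ∑ i, k i = 1 := by rw [← degree_eq_sum_univ, hdeg]
    have hkj0 : k j = 0 := by
      by_contra h0
      apply hkj
      have hj1 : 1 ≤ k j := Nat.one_le_iff_ne_zero.mpr h0
      have hsplit : k j + ∑ i ∈ Finset.univ.erase j, k i = 1 := by
        rw [Finset.add_sum_erase _ _ (Finset.mem_univ j)]; exact hsum
      have hkj1 : k j = 1 := by omega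
      have hrest : ∑ i ∈ Finset.univ.erase j, k i = 0 := by omega
      ext i
      rcases eq_or_ne i j with rfl | hij
      · simp [hkj1]
      · have : k i = 0 :=
          (Finset.sum_eq_zero_iff.mp hrest) i (Finset.mem_erase.mpr ⟨hij, Finset.mem_univ i⟩)
        simp [Finsupp.single_apply, Ne.symm hij, this]
    simp [hkj0]
  · intro h0
    simp [notMem_support_iff.mp h0]

lemma desc_mul (k s t : ℕ) :
    k.descFactorial s * (k - s).descFactorial t = k.descFactorial (s + t) := by
  induction t with
  | zero => simp
  | succ t ih =>
    rw [Nat.descFactorial_succ, ← Nat.add_assoc, Nat.descFactorial_succ, ← ih,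
      Nat.sub_sub]
    ring

lemma pow_pderiv_lpow {ℓ : MvPolynomial (Fin N) ℂ} (h : ℓ.IsHomogeneous 1) (i : Fin N)
    (t k : ℕ) :
    (((pderiv i : Derivation ℂ (MvPolynomial (Fin N) ℂ) (MvPolynomial (Fin N) ℂ)).toLinearMap) ^ t) (ℓ ^ k)
      = ((k.descFactorial t : ℂ) * (coeff (Finsupp.single i 1) ℓ) ^ t) • ℓ ^ (k - t) := by
  induction t with
  | zero => simp
  | succ t ih =>
    rw [pow_succ', Module.End.mul_apply, ih, map_smul]
    have hder : (pderiv i) (ℓ ^ (k - t)) = (k - t) • (ℓ ^ (k - t - 1) * C (coeff (Finsupp.single i 1) ℓ)) := by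
      rw [(pderiv i).leibniz_pow, pderiv_eq_C h i, smul_eq_mul]
    simp only [Derivation.coeFn_coe] at hder ⊢
    rw [hder, Nat.sub_sub, ← Nat.cast_smul_eq_nsmul ℂ, smul_smul, Nat.descFactorial_succ,
      smul_eq_C_mul, smul_eq_C_mul]
    push_cast
    simp only [map_mul, map_pow]
    ring

lemma list_prod_pderiv_lpow {ℓ : MvPolynomial (Fin N) ℂ} (h : ℓ.IsHomogeneous 1)
    (m : Fin N →₀ ℕ) (L : List (Fin N)) (k : ℕ) :
    ((L.map (fun i => ((pderiv i : Derivation ℂ (MvPolynomial (Fin N) ℂ) (MvPolynomial (Fin N) ℂ)).toLinearMap) ^ (m i))).prod) (ℓ ^ k)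
      = ((k.descFactorial (L.map m).sum : ℂ) *
          (L.map (fun i => (coeff (Finsupp.single i 1) ℓ) ^ (m i))).prod) • ℓ ^ (k - (L.map m).sum) := by
  induction L with
  | nil => simp
  | cons i L ih =>
    rw [List.map_cons, List.prod_cons, Module.End.mul_apply, ih, map_smul,
      pow_pderiv_lpow h, List.map_cons, List.sum_cons, List.map_cons, List.prod_cons,
      smul_smul, Nat.sub_sub, Nat.add_comm (m i) ((L.map m).sum)]
    congr 1
    rw [← desc_mul k ((L.map m).sum) (m i)]
    push_cast
    ring

lemma monoDeriv_lpow {ℓ : MvPolynomial (Fin N) ℂ} (h : ℓ.IsHomogeneous 1)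
    (m : Fin N →₀ ℕ) (d : ℕ) :
    monoDeriv m (ℓ ^ d) = ((d.descFactorial m.degree : ℂ) *
      ∏ i, (coeff (Finsupp.single i 1) ℓ) ^ (m i)) • ℓ ^ (d - m.degree) := by
  rw [monoDeriv, list_prod_pderiv_lpow h]
  rw [degree_eq_sum_univ, Fin.sum_univ_def, Fin.prod_univ_def]

lemma apolarAct_lpow {ℓ : MvPolynomial (Fin N) ℂ} (h : ℓ.IsHomogeneous 1)
    {F : MvPolynomial (Fin N) ℂ} {e : ℕ} (hF : F.IsHomogeneous e) (d : ℕ) :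
    apolarAct F (ℓ ^ d) = ((d.descFactorial e : ℂ) *
      eval (fun j => coeff (Finsupp.single j 1) ℓ) F) • ℓ ^ (d - e) := by
  rw [apolarAct, eval_eq', Finset.mul_sum, Finset.sum_smul]
  refine Finset.sum_congr rfl fun m hm => ?_
  rw [monoDeriv_lpow h, homog_degree hF hm, smul_smul]
  congr 1
  ring

lemma pow_pderiv_monomial (i : Fin N) (t : ℕ) (k : Fin N →₀ ℕ) (c : ℂ) :
    (((pderiv i : Derivation ℂ (MvPolynomial (Fin N) ℂ) (MvPolynomial (Fin N) ℂ)).toLinearMap) ^ t) (monomial k c)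
      = monomial (k - Finsupp.single i t) (c * ((k i).descFactorial t : ℂ)) := by
  induction t with
  | zero => simp
  | succ t ih =>
    rw [pow_succ', Module.End.mul_apply, ih]
    simp only [Derivation.coeFn_coe]
    rw [pderiv_monomial]
    have h1 : (k - Finsupp.single i t) i = k i - t := by
      rw [Finsupp.tsub_apply, Finsupp.single_eq_same]
    have h2 : k - Finsupp.single i t - Finsupp.single i 1 = k - Finsupp.single i (t + 1) := by
      rw [tsub_tsub, ← Finsupp.single_add]
    rw [h1, h2, Nat.descFactorial_succ]
    congr 1
    push_cast
    ring

lemma list_sum_single_apply (m : Fin N →₀ ℕ) (L : List (Fin N)) (i : Fin N) (hi : i ∉ L) :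
    ((L.map fun j => Finsupp.single j (m j)).sum) i = 0 := by
  induction L with
  | nil => simp
  | cons j L ih =>
    simp only [List.mem_cons, not_or] at hi
    rw [List.map_cons, List.sum_cons, Finsupp.add_apply, ih hi.2,
      Finsupp.single_apply, if_neg (fun h => hi.1 h.symm)]

lemma list_prod_pderiv_monomial (m : Fin N →₀ ℕ) (L : List (Fin N)) (hL : L.Nodup)
    (k : Fin N →₀ ℕ) (c : ℂ) :
    ((L.map (fun i => ((pderiv i : Derivation ℂ (MvPolynomial (Fin N) ℂ) (MvPolynomial (Fin N) ℂ)).toLinearMap) ^ (m i))).prod) (monomial k c)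
      = monomial (k - (L.map fun i => Finsupp.single i (m i)).sum)
          (c * (L.map fun i => (((k i).descFactorial (m i) : ℂ))).prod) := by
  induction L with
  | nil => simp
  | cons i L ih =>
    obtain ⟨hi, hL'⟩ := List.nodup_cons.mp hL
    rw [List.map_cons, List.prod_cons, Module.End.mul_apply, ih hL',
      pow_pderiv_monomial, List.map_cons, List.sum_cons, List.map_cons, List.prod_cons]
    have h1 : (k - (L.map fun j => Finsupp.single j (m j)).sum) i = k i := by
      rw [Finsupp.tsub_apply, list_sum_single_apply m L i hi, Nat.sub_zero]
    have h2 : k - (L.map fun j => Finsupp.single j (m j)).sum - Finsupp.single i (m i)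
        = k - (Finsupp.single i (m i) + (L.map fun j => Finsupp.single j (m j)).sum) := by
      rw [tsub_tsub, add_comm]
    rw [h1, h2]
    congr 1
    ring

lemma monoDeriv_monomial (m k : Fin N →₀ ℕ) (c : ℂ) :
    monoDeriv m (monomial k c)
      = monomial (k - m) (c * ∏ i, (((k i).descFactorial (m i) : ℂ))) := by
  rw [monoDeriv, list_prod_pderiv_monomial m _ (List.nodup_finRange N)]
  have hsum : ((List.finRange N).map fun j => Finsupp.single j (m j)).sum = m := by
    rw [← Fin.sum_univ_def]; exact Finsupp.univ_sum_single m
  rw [hsum, Fin.prod_univ_def]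

lemma monoDeriv_monomial_eq {m k : Fin N →₀ ℕ} (c : ℂ) (hmk : m.degree = k.degree) :
    monoDeriv m (monomial k c)
      = if m = k then C (c * ∏ i, ((Nat.factorial (m i) : ℂ))) else 0 := by
  rw [monoDeriv_monomial]
  by_cases h : m = k
  · subst h
    simp [Nat.descFactorial_self, monomial_zero']
  · rw [if_neg h]
    have hex : ∃ i, k i < m i := by
      by_contra hc
      push_neg at hc
      apply h
      have hsum : ∑ i, m i = ∑ i, k i := by
        rw [← degree_eq_sum_univ, ← degree_eq_sum_univ, hmk]
      ext i
      exact (Finset.sum_eq_sum_iff_of_le (fun i _ => hc i)).mp hsum i (Finset.mem_univ i)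
    obtain ⟨i, hi⟩ := hex
    have h0 : (((k i).descFactorial (m i) : ℂ)) = 0 := by
      rw [Nat.descFactorial_eq_zero_iff_lt.mpr hi, Nat.cast_zero]
    rw [Finset.prod_eq_zero (Finset.mem_univ i) h0, mul_zero, monomial_zero]

lemma apolarAct_pair {F g : MvPolynomial (Fin N) ℂ} {d : ℕ}
    (hF : F.IsHomogeneous d) (hg : g.IsHomogeneous d) :
    apolarAct F g = C (∑ m ∈ F.support, coeff m F * coeff m g * ∏ i, ((Nat.factorial (m i) : ℂ))) := by
  rw [apolarAct, map_sum]
  refine Finset.sum_congr rfl fun m hm => ?_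
  have hmono : monoDeriv m g = C (coeff m g * ∏ i, ((Nat.factorial (m i) : ℂ))) := by
    conv_lhs => rw [g.as_sum, map_sum]
    rw [Finset.sum_eq_single m]
    · rw [monoDeriv_monomial_eq _ rfl, if_pos rfl]
    · intro k hk hkm
      rw [monoDeriv_monomial_eq _ ((homog_degree hF hm).trans (homog_degree hg hk).symm),
        if_neg (Ne.symm hkm)]
    · intro hm0
      rw [notMem_support_iff.mp hm0]
      simp
  rw [hmono, smul_eq_C_mul, ← map_mul]
  ring_nf

lemma apolarAct_linear (F : MvPolynomial (Fin N) ℂ) (r : ℕ) (lam : Fin r → ℂ)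
    (g : Fin r → MvPolynomial (Fin N) ℂ) :
    apolarAct F (∑ i, lam i • g i) = ∑ i, lam i • apolarAct F (g i) := by
  simp only [apolarAct, map_sum, map_smul, Finset.smul_sum]
  rw [Finset.sum_comm]
  refine Finset.sum_congr rfl fun i _ => Finset.sum_congr rfl fun m _ => ?_
  rw [smul_comm]

end Aux

/-- Apolarity Lemma: `f` (homogeneous of degree `d`) is a linear combination of the
`d`-th powers of the pairwise non-proportional nonzero linear forms `ℓ i` iff the
homogeneous ideal of the corresponding set of points of `ℙⁿ` is contained in `Ann f`,
i.e. iff every homogeneous form vanishing at all the points is apolar to `f`. -/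
theorem stmt1 (n d r : ℕ) (f : MvPolynomial (Fin (n+1)) ℂ) (hf : f.IsHomogeneous d)
    (ℓ : Fin r → MvPolynomial (Fin (n+1)) ℂ)
    (hhom : ∀ i, (ℓ i).IsHomogeneous 1) (hne : ∀ i, ℓ i ≠ 0)
    (hprop : ∀ i j, i ≠ j → ∀ c : ℂ, ℓ i ≠ c • ℓ j) :
    (∃ lam : Fin r → ℂ, f = ∑ i, lam i • (ℓ i) ^ d) ↔
      (∀ (F : MvPolynomial (Fin (n+1)) ℂ) (e : ℕ), F.IsHomogeneous e →
        (∀ i, eval (fun j => coeff (Finsupp.single j 1) (ℓ i)) F = 0) →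
        apolarAct F f = 0) := by
  constructor
  · rintro ⟨lam, rfl⟩ F e hF hvan
    rw [apolarAct_linear]
    refine Finset.sum_eq_zero fun i _ => ?_
    rw [apolarAct_lpow (hhom i) hF d, hvan i, mul_zero, zero_smul, smul_zero]
  · intro H
    by_contra hfs
    have hf_not : f ∉ Submodule.span ℂ (Set.range fun i => ℓ i ^ d) := by
      intro hmem
      obtain ⟨c, hc⟩ := (Submodule.mem_span_range_iff_exists_fun ℂ).mp hmem
      exact hfs ⟨c, hc.symm⟩
    obtain ⟨φ, hφf, hφW⟩ :=
      Submodule.exists_dual_map_eq_bot_of_notMem hf_not Module.Projective.of_free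
    have hφzero : ∀ g ∈ Submodule.span ℂ (Set.range fun i => ℓ i ^ d), φ g = 0 := by
      intro g hg
      have : φ g ∈ (Submodule.span ℂ (Set.range fun i => ℓ i ^ d)).map φ :=
        Submodule.mem_map_of_mem hg
      rwa [hφW, Submodule.mem_bot] at this
    -- the finite set of exponents
    set S : Finset (Fin (n+1) →₀ ℕ) :=
      f.support ∪ Finset.univ.biUnion (fun i => ((ℓ i) ^ d).support) with hS
    have hSdeg : ∀ m ∈ S, m.degree = d := by
      intro m hm
      rcases Finset.mem_union.mp hm with h | h
      · exact homog_degree hf h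
      · obtain ⟨i, _, hi⟩ := Finset.mem_biUnion.mp h
        have : ((ℓ i) ^ d).IsHomogeneous d := by
          have := (hhom i).pow d
          rwa [one_mul] at this
        exact homog_degree this hi
    set F : MvPolynomial (Fin (n+1)) ℂ :=
      ∑ m ∈ S, monomial m (φ (monomial m 1) / ∏ i, ((Nat.factorial (m i) : ℂ))) with hF
    have hfac_ne : ∀ m : Fin (n+1) →₀ ℕ, (∏ i, ((Nat.factorial (m i) : ℂ))) ≠ 0 := by
      intro m
      refine Finset.prod_ne_zero_iff.mpr fun i _ => ?_
      exact_mod_cast Nat.cast_ne_zero.mpr (Nat.factorial_ne_zero _)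
    have hFhom : F.IsHomogeneous d := by
      rw [hF]
      exact MvPolynomial.IsHomogeneous.sum _ _ _ fun m hm =>
        isHomogeneous_monomial _ (hSdeg m hm)
    have hcoeffF : ∀ m, coeff m F =
        if m ∈ S then φ (monomial m 1) / ∏ i, ((Nat.factorial (m i) : ℂ)) else 0 := by
      intro m
      rw [hF]
      rw [coeff_sum]
      simp_rw [coeff_monomial]
      rw [Finset.sum_ite_eq' S m]
    have hFsupp : F.support ⊆ S := by
      intro m hm
      by_contra hmS
      exact (mem_support_iff.mp hm) (by rw [hcoeffF m, if_neg hmS])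
    -- key representation lemma
    have key : ∀ g : MvPolynomial (Fin (n+1)) ℂ, g.IsHomogeneous d → g.support ⊆ S →
        apolarAct F g = C (φ g) := by
      intro g hg hgS
      rw [apolarAct_pair hFhom hg]
      congr 1
      rw [Finset.sum_subset hFsupp (fun m _ hm => by
        rw [notMem_support_iff.mp hm]; ring)]
      have hg_sum : g = ∑ m ∈ S, monomial m (coeff m g) := by
        conv_lhs => rw [g.as_sum]
        exact Finset.sum_subset hgS (fun m _ hm => by
          rw [notMem_support_iff.mp hm, monomial_zero])
      conv_rhs => rw [hg_sum, map_sum]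
      refine Finset.sum_congr rfl fun m hm => ?_
      rw [hcoeffF m, if_pos hm]
      have hmono : (monomial m (coeff m g) : MvPolynomial (Fin (n+1)) ℂ)
          = coeff m g • monomial m 1 := by
        rw [smul_monomial, smul_eq_mul, mul_one]
      rw [hmono, map_smul, smul_eq_mul]
      rw [div_mul_eq_mul_div, div_mul_eq_mul_div, div_eq_iff (hfac_ne m)]
      ring
    -- eval of F at the points vanishes
    have hvan : ∀ i, eval (fun j => coeff (Finsupp.single j 1) (ℓ i)) F = 0 := by
      intro i
      have h1 : apolarAct F ((ℓ i) ^ d) = C (φ ((ℓ i) ^ d)) := by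
        refine key _ ?_ ?_
        · have := (hhom i).pow d; rwa [one_mul] at this
        · intro m hm
          exact Finset.mem_union_right _ (Finset.mem_biUnion.mpr ⟨i, Finset.mem_univ i, hm⟩)
      have h2 : φ ((ℓ i) ^ d) = 0 :=
        hφzero _ (Submodule.subset_span ⟨i, rfl⟩)
      rw [h2, map_zero] at h1
      rw [apolarAct_lpow (hhom i) hFhom d, Nat.sub_self, pow_zero, smul_eq_C_mul, mul_one] at h1
      have h3 : (d.descFactorial d : ℂ) * eval (fun j => coeff (Finsupp.single j 1) (ℓ i)) F = 0 :=
        C_injective _ _ (h1.trans (map_zero C).symm)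
      have h4 : (d.descFactorial d : ℂ) ≠ 0 := by
        rw [Nat.descFactorial_self]
        exact_mod_cast Nat.factorial_ne_zero d
      exact (mul_eq_zero.mp h3).resolve_left h4
    have hzero : apolarAct F f = 0 := H F d hFhom hvan
    rw [key f hf (Finset.subset_union_left)] at hzero
    have : φ f = 0 := C_injective _ _ (hzero ▸ (map_zero C).symm)
    exact hφf this
end

section
/- Let k ≥ 2 and f = x^k y^k + x^{2k} ∈ ℂ[x,y]. Then the apolar ideal of f is Ann(f) = (Y^{k+1}, X^{k+1} − binom(2k,k)·X Y^k), where X, Y act as ∂/∂x, ∂/∂y. -/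
open MvPolynomial

namespace Stmt5Aux
open Finsupp

noncomputable def P (i : Fin 2) : Module.End ℂ (MvPolynomial (Fin 2) ℂ) := (pderiv i).toLinearMap

lemma monoDeriv_eq (m : Fin 2 →₀ ℕ) : monoDeriv m = P 0 ^ m 0 * P 1 ^ m 1 := by
  show ((List.finRange 2).map _).prod = _
  rw [show List.finRange 2 = [0, 1] by decide]
  simp [P, monoDeriv]

lemma sub_single_apply_ne (s : Fin 2 →₀ ℕ) (i j : Fin 2) (n : ℕ) (h : j ≠ i) :
    (s - Finsupp.single i n) j = s j := by
  rw [Finsupp.tsub_apply, Finsupp.single_apply, if_neg (fun he => h he.symm), Nat.sub_zero]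

lemma pderiv_pderiv (p : MvPolynomial (Fin 2) ℂ) :
    pderiv (0 : Fin 2) (pderiv 1 p) = pderiv 1 (pderiv 0 p) := by
  induction p using MvPolynomial.induction_on' with
  | monomial s a =>
      rw [pderiv_monomial, pderiv_monomial, pderiv_monomial, pderiv_monomial,
        sub_single_apply_ne s 1 0 1 (by decide), sub_single_apply_ne s 0 1 1 (by decide),
        tsub_tsub, tsub_tsub, add_comm (Finsupp.single (1:Fin 2) 1)]
      congr 1
      ring
  | add p q hp hq => simp [hp, hq]

lemma commuteP : Commute (P 0) (P 1) := by
  apply LinearMap.ext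
  intro p
  simp only [P, Module.End.mul_apply, Derivation.coeFn_coe]
  rw [pderiv_pderiv p]

lemma monoDeriv_zero : monoDeriv (0 : Fin 2 →₀ ℕ) = 1 := by
  rw [monoDeriv_eq]; simp

lemma monoDeriv_add (m m' : Fin 2 →₀ ℕ) :
    monoDeriv (m + m') = monoDeriv m * monoDeriv m' := by
  rw [monoDeriv_eq, monoDeriv_eq, monoDeriv_eq]
  simp only [Finsupp.add_apply, pow_add]
  rw [mul_assoc, mul_assoc]
  congr 1
  rw [← mul_assoc, ← mul_assoc]
  congr 1
  exact Commute.pow_pow commuteP _ _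


lemma P_pow_monomial (i : Fin 2) (a : ℕ) (s : Fin 2 →₀ ℕ) (c : ℂ) :
    (P i ^ a) (monomial s c)
      = monomial (s - Finsupp.single i a) (c * (s i).descFactorial a) := by
  induction a generalizing s c with
  | zero => simp
  | succ a ih =>
      rw [pow_succ, Module.End.mul_apply]
      have h1 : (P i) (monomial s c) = monomial (s - Finsupp.single i 1) (c * s i) := by
        simp only [P, Derivation.coeFn_coe]
        rw [pderiv_monomial]
      rw [h1, ih, Finsupp.tsub_apply, Finsupp.single_eq_same, tsub_tsub,
        ← Finsupp.single_add, add_comm 1 a]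
      congr 1
      cases hsi : s i with
      | zero => simp
      | succ n =>
          rw [Nat.succ_sub_one, Nat.succ_descFactorial_succ]
          push_cast
          ring

lemma fin2_eq (m : Fin 2 →₀ ℕ) : Finsupp.single 0 (m 0) + Finsupp.single 1 (m 1) = m := by
  ext j
  fin_cases j <;> simp [Finsupp.single_apply]

lemma monoDeriv_monomial (m s : Fin 2 →₀ ℕ) (c : ℂ) :
    monoDeriv m (monomial s c) = monomial (s - m)
      (c * (s 0).descFactorial (m 0) * (s 1).descFactorial (m 1)) := by
  rw [monoDeriv_eq, Module.End.mul_apply, P_pow_monomial, P_pow_monomial,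
    sub_single_apply_ne s 1 0 (m 1) (by decide), tsub_tsub,
    add_comm (Finsupp.single (1 : Fin 2) (m 1)), fin2_eq]
  congr 1
  ring

lemma apolarAct_eq (D f : MvPolynomial (Fin 2) ℂ) :
    apolarAct D f = Finsupp.sum (AddMonoidAlgebra.coeff D) fun m c => c • monoDeriv m f := by
  rw [sum_def]; rfl

lemma apolarAct_monomial (m : Fin 2 →₀ ℕ) (c : ℂ) (f : MvPolynomial (Fin 2) ℂ) :
    apolarAct (monomial m c) f = c • monoDeriv m f := by
  rw [apolarAct_eq]
  exact sum_monomial_eq (by simp)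

lemma apolarAct_add_left (D E f : MvPolynomial (Fin 2) ℂ) :
    apolarAct (D + E) f = apolarAct D f + apolarAct E f := by
  rw [apolarAct_eq, apolarAct_eq, apolarAct_eq, AddMonoidAlgebra.coeff_add]
  exact Finsupp.sum_add_index' (by simp) (by intros; rw [add_smul])

lemma apolarAct_neg_left (E f : MvPolynomial (Fin 2) ℂ) :
    apolarAct (-E) f = - apolarAct E f := by
  rw [apolarAct_eq, apolarAct_eq, AddMonoidAlgebra.coeff_neg, Finsupp.sum_neg_index (by simp)]
  simp only [neg_smul]
  rw [Finsupp.sum, Finsupp.sum, Finset.sum_neg_distrib]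

lemma apolarAct_sub_left (D E f : MvPolynomial (Fin 2) ℂ) :
    apolarAct (D - E) f = apolarAct D f - apolarAct E f := by
  rw [sub_eq_add_neg, apolarAct_add_left, apolarAct_neg_left, sub_eq_add_neg]

lemma apolarAct_zero_right (D : MvPolynomial (Fin 2) ℂ) : apolarAct D 0 = 0 := by
  rw [apolarAct_eq]
  simp [Finsupp.sum]

lemma apolarAct_add_right (D f g : MvPolynomial (Fin 2) ℂ) :
    apolarAct D (f + g) = apolarAct D f + apolarAct D g := by
  simp [apolarAct, map_add, smul_add, Finset.sum_add_distrib]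

lemma apolarAct_mul (D E f : MvPolynomial (Fin 2) ℂ) :
    apolarAct (D * E) f = apolarAct D (apolarAct E f) := by
  induction D using MvPolynomial.induction_on' with
  | add p q hp hq => rw [add_mul, apolarAct_add_left, hp, hq, apolarAct_add_left]
  | monomial m c =>
    induction E using MvPolynomial.induction_on' with
    | add p q hp hq =>
        rw [mul_add, apolarAct_add_left, hp, hq, apolarAct_add_left, apolarAct_add_right]
    | monomial m' c' =>
        rw [monomial_mul, apolarAct_monomial, apolarAct_monomial, apolarAct_monomial,
          monoDeriv_add, Module.End.mul_apply, map_smul, smul_smul]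

noncomputable def fe (a b : ℕ) : Fin 2 →₀ ℕ := Finsupp.single 0 a + Finsupp.single 1 b

@[simp] lemma fe_apply0 (a b : ℕ) : fe a b 0 = a := by
  simp [fe, Finsupp.single_apply]

@[simp] lemma fe_apply1 (a b : ℕ) : fe a b 1 = b := by
  simp [fe, Finsupp.single_apply]

lemma fe_eq (m : Fin 2 →₀ ℕ) : fe (m 0) (m 1) = m := fin2_eq m

lemma fe_inj {a b a' b' : ℕ} (h : fe a b = fe a' b') : a = a' ∧ b = b' := by
  constructor
  · have := congrArg (fun g : Fin 2 →₀ ℕ => g 0) h; simpa using this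
  · have := congrArg (fun g : Fin 2 →₀ ℕ => g 1) h; simpa using this

lemma fe_sub (a b a' b' : ℕ) : fe a b - fe a' b' = fe (a - a') (b - b') := by
  ext j
  fin_cases j <;> simp [Finsupp.tsub_apply]

lemma single0_eq_fe (a : ℕ) : Finsupp.single (0 : Fin 2) a = fe a 0 := by
  simp [fe]

lemma single1_eq_fe (b : ℕ) : Finsupp.single (1 : Fin 2) b = fe 0 b := by
  simp [fe]

section K
variable (k : ℕ)

lemma f_eq : (X 0 : MvPolynomial (Fin 2) ℂ) ^ k * X 1 ^ k + X 0 ^ (2*k)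
    = monomial (fe k k) 1 + monomial (fe (2*k) 0) 1 := by
  rw [X_pow_eq_monomial, X_pow_eq_monomial, monomial_mul, X_pow_eq_monomial, mul_one]
  congr 1
  rw [single0_eq_fe]

lemma monoDeriv_f (m : Fin 2 →₀ ℕ) :
    monoDeriv m ((X 0 : MvPolynomial (Fin 2) ℂ) ^ k * X 1 ^ k + X 0 ^ (2*k))
      = monomial (fe (k - m 0) (k - m 1)) ((k.descFactorial (m 0) : ℂ) * (k.descFactorial (m 1) : ℂ))
        + monomial (fe (2*k - m 0) (0 - m 1)) (((2*k).descFactorial (m 0) : ℂ) * ((0 : ℕ).descFactorial (m 1) : ℂ)) := by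
  rw [f_eq, map_add, monoDeriv_monomial, monoDeriv_monomial]
  rw [← fe_eq m, fe_sub, fe_sub]
  simp

lemma ann_g1 : apolarAct ((X 1 : MvPolynomial (Fin 2) ℂ) ^ (k+1))
    ((X 0 : MvPolynomial (Fin 2) ℂ) ^ k * X 1 ^ k + X 0 ^ (2*k)) = 0 := by
  rw [X_pow_eq_monomial, single1_eq_fe, apolarAct_monomial, one_smul, monoDeriv_f]
  simp only [fe_apply0, fe_apply1]
  simp [Nat.descFactorial_eq_zero_iff_lt]

lemma g2_eq : (X 0 : MvPolynomial (Fin 2) ℂ) ^ (k+1) - C ((2*k).choose k : ℂ) * (X 0 * X 1 ^ k)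
    = monomial (fe (k+1) 0) 1 - monomial (fe 1 k) ((2*k).choose k : ℂ) := by
  rw [X_pow_eq_monomial, single0_eq_fe]
  congr 1
  have h : (X 0 : MvPolynomial (Fin 2) ℂ) * X 1 ^ k = monomial (fe 1 k) 1 := by
    rw [← pow_one (X 0 : MvPolynomial (Fin 2) ℂ), X_pow_eq_monomial, X_pow_eq_monomial,
      monomial_mul, one_mul]
    rfl
  rw [h, C_mul_monomial, mul_one]

lemma desc_key (hk : 1 ≤ k) :
    (2*k).descFactorial (k+1) = (2*k).choose k * (k * k.factorial) := by
  rw [Nat.descFactorial_succ, Nat.descFactorial_eq_factorial_mul_choose]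
  have h : 2*k - k = k := by omega
  rw [h]; ring

lemma ann_g2 (hk : 2 ≤ k) :
    apolarAct ((X 0 : MvPolynomial (Fin 2) ℂ) ^ (k+1) - C ((2*k).choose k : ℂ) * (X 0 * X 1 ^ k))
      ((X 0 : MvPolynomial (Fin 2) ℂ) ^ k * X 1 ^ k + X 0 ^ (2*k)) = 0 := by
  rw [g2_eq, apolarAct_sub_left, apolarAct_monomial, apolarAct_monomial, one_smul,
    monoDeriv_f, monoDeriv_f]
  simp only [fe_apply0, fe_apply1]
  have h1 : Nat.descFactorial k (k+1) = 0 := Nat.descFactorial_eq_zero_iff_lt.mpr (Nat.lt_succ_self _)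
  have h2 : Nat.descFactorial 0 k = 0 := Nat.descFactorial_eq_zero_iff_lt.mpr (by omega)
  have h3 : 2*k - (k+1) = k - 1 := by omega
  have h4 : Nat.descFactorial k 1 = k := Nat.descFactorial_one k
  have h5 : Nat.descFactorial k k = k.factorial := Nat.descFactorial_self k
  rw [h1, h2, h3, h4, h5]
  simp only [Nat.descFactorial_zero, Nat.sub_self, Nat.zero_sub, Nat.cast_zero, Nat.cast_one,
    zero_mul, mul_zero, mul_one, one_mul, map_zero, zero_add, add_zero, smul_add, smul_zero]
  rw [smul_monomial]
  rw [← map_sub]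
  convert map_zero (monomial (fe (k-1) 0) : ℂ →ₗ[ℂ] MvPolynomial (Fin 2) ℂ) using 2
  have := desc_key k (by omega)
  rw [sub_eq_zero, smul_eq_mul]
  push_cast [this]
  ring

noncomputable def rmono (m : Fin 2 →₀ ℕ) : MvPolynomial (Fin 2) ℂ :=
  if k + 1 ≤ m 1 then 0
  else if m 0 ≤ k then monomial m 1
  else if 1 ≤ m 1 then 0
  else if m 0 ≤ 2*k then monomial (fe (m 0 - k) k) ((2*k).choose k : ℂ)
  else 0

noncomputable def rD (D : MvPolynomial (Fin 2) ℂ) : MvPolynomial (Fin 2) ℂ :=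
  ∑ m ∈ D.support, D.coeff m • rmono k m

lemma coeff_rmono_box (m m' : Fin 2 →₀ ℕ) (h : ¬(m' 0 ≤ k ∧ m' 1 ≤ k)) :
    coeff m' (rmono k m) = 0 := by
  unfold rmono
  split_ifs with h1 h2 h3 h4
  · simp
  · rw [coeff_monomial, if_neg]
    intro he
    subst he
    exact h ⟨h2, by omega⟩
  · simp
  · rw [coeff_monomial, if_neg]
    intro he
    apply h
    rw [← he]
    exact ⟨by simp; omega, by simp⟩
  · simp

lemma coeff_rD_box (D : MvPolynomial (Fin 2) ℂ) (m' : Fin 2 →₀ ℕ)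
    (h : ¬(m' 0 ≤ k ∧ m' 1 ≤ k)) : coeff m' (rD k D) = 0 := by
  unfold rD
  rw [coeff_sum]
  apply Finset.sum_eq_zero
  intro m _
  rw [coeff_smul, coeff_rmono_box k m m' h, smul_zero]

lemma monomial_fe_one (a b : ℕ) :
    monomial (fe a b) (1 : ℂ) = X 0 ^ a * X 1 ^ b := by
  rw [X_pow_eq_monomial, X_pow_eq_monomial, monomial_mul, one_mul]
  rfl

lemma monomial_fe_c (a b : ℕ) (c : ℂ) :
    monomial (fe a b) c = C c * (X 0 ^ a * X 1 ^ b) := by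
  rw [← monomial_fe_one, C_mul_monomial, mul_one]

lemma mem_span_sub_rmono (hk : 2 ≤ k) (m : Fin 2 →₀ ℕ) :
    monomial m 1 - rmono k m ∈ Ideal.span {(X 1 : MvPolynomial (Fin 2) ℂ) ^ (k+1),
      (X 0) ^ (k+1) - C ((Nat.choose (2*k) k : ℂ)) * (X 0 * (X 1) ^ k)} := by
  set c : ℂ := ((2*k).choose k : ℂ) with hc
  have hm : monomial m (1 : ℂ) = X 0 ^ m 0 * X 1 ^ m 1 := by
    rw [← fe_eq m, monomial_fe_one, fe_apply0, fe_apply1]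
  unfold rmono
  rw [Ideal.mem_span_pair]
  split_ifs with h1 h2 h3 h4
  · obtain ⟨j, hj⟩ := Nat.exists_eq_add_of_le h1
    exact ⟨X 0 ^ m 0 * X 1 ^ j, 0, by rw [sub_zero, hm, hj]; ring⟩
  · exact ⟨0, 0, by rw [sub_self]; ring⟩
  · obtain ⟨i, hi⟩ := Nat.exists_eq_add_of_le (by omega : k + 1 ≤ m 0)
    obtain ⟨j, hj⟩ := Nat.exists_eq_add_of_le (by omega : 1 ≤ m 1)
    exact ⟨C c * (X 0 ^ (i+1) * X 1 ^ j), X 0 ^ i * X 1 ^ (1+j),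
      by rw [sub_zero, hm, hi, hj]; ring⟩
  · obtain ⟨i, hi⟩ := Nat.exists_eq_add_of_le (by omega : k + 1 ≤ m 0)
    have hm1 : m 1 = 0 := by omega
    have hik : m 0 - k = i + 1 := by omega
    refine ⟨0, X 0 ^ i, ?_⟩
    rw [hm, monomial_fe_c, hik, hi, hm1]
    ring
  · obtain ⟨i, hi⟩ := Nat.exists_eq_add_of_le (by omega : 2*k + 1 ≤ m 0)
    obtain ⟨t, ht⟩ := Nat.exists_eq_add_of_le (by omega : 1 ≤ k)
    have hm1 : m 1 = 0 := by omega
    refine ⟨C c * C c * (X 0 ^ (i+1) * X 1 ^ t), X 0 ^ (k+i) + C c * (X 0 ^ i * X 1 ^ k), ?_⟩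
    rw [sub_zero, hm, hm1, hi, ht]
    ring

lemma sub_rD_mem_span (hk : 2 ≤ k) (D : MvPolynomial (Fin 2) ℂ) :
    D - rD k D ∈ Ideal.span {(X 1 : MvPolynomial (Fin 2) ℂ) ^ (k+1),
      (X 0) ^ (k+1) - C ((Nat.choose (2*k) k : ℂ)) * (X 0 * (X 1) ^ k)} := by
  have h : D - rD k D = ∑ m ∈ D.support, D.coeff m • (monomial m 1 - rmono k m) := by
    simp only [smul_sub, Finset.sum_sub_distrib]
    congr 1
    simp only [smul_monomial, smul_eq_mul, mul_one]
    exact (support_sum_monomial_coeff D).symm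
  rw [h]
  refine Submodule.sum_mem _ fun m _ => ?_
  rw [smul_eq_C_mul]
  exact Ideal.mul_mem_left _ _ (mem_span_sub_rmono k hk m)

lemma inj_box (hk : 2 ≤ k) (R : MvPolynomial (Fin 2) ℂ)
    (hbox : ∀ m', ¬(m' 0 ≤ k ∧ m' 1 ≤ k) → coeff m' R = 0)
    (hann : apolarAct R ((X 0 : MvPolynomial (Fin 2) ℂ) ^ k * X 1 ^ k + X 0 ^ (2*k)) = 0) :
    R = 0 := by
  have hsum : ∀ t : Fin 2 →₀ ℕ, ∑ m ∈ R.support,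
      R.coeff m * coeff t (monoDeriv m ((X 0 : MvPolynomial (Fin 2) ℂ) ^ k * X 1 ^ k + X 0 ^ (2*k))) = 0 := by
    intro t
    have h0 := congrArg (coeff t) hann
    simp only [coeff_zero] at h0
    rw [← h0]
    unfold apolarAct
    rw [coeff_sum]
    exact Finset.sum_congr rfl fun m _ => by rw [coeff_smul, smul_eq_mul]
  have hinbox : ∀ m ∈ R.support, m 0 ≤ k ∧ m 1 ≤ k := by
    intro m hm
    by_contra hb
    exact (MvPolynomial.mem_support_iff.mp hm) (hbox m hb)
  have stepA : ∀ m ∈ R.support, m 1 = k := by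
    intro m hm
    by_contra hne
    obtain ⟨hb0, hb1⟩ := hinbox m hm
    have hm1 : m 1 < k := lt_of_le_of_ne hb1 hne
    have h := hsum (fe (k - m 0) (k - m 1))
    rw [Finset.sum_eq_single_of_mem m hm ?side] at h
    case side =>
      intro m' hm' hne'
      obtain ⟨hb0', hb1'⟩ := hinbox m' hm'
      rw [monoDeriv_f, coeff_add, coeff_monomial, coeff_monomial,
        if_neg ?n1, if_neg ?n2, add_zero, mul_zero]
      case n1 =>
        intro he
        obtain ⟨e0, e1⟩ := fe_inj he
        apply hne'
        rw [← fe_eq m', ← fe_eq m]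
        have h5 : m' 0 = m 0 := by omega
        have h6 : m' 1 = m 1 := by omega
        rw [h5, h6]
      case n2 =>
        intro he
        obtain ⟨e0, e1⟩ := fe_inj he
        omega
    · rw [monoDeriv_f, coeff_add, coeff_monomial, coeff_monomial, if_pos rfl,
        if_neg ?n3, add_zero] at h
      case n3 =>
        intro he
        obtain ⟨e0, e1⟩ := fe_inj he
        omega
      have d1 : k.descFactorial (m 0) ≠ 0 := by
        rw [Ne, Nat.descFactorial_eq_zero_iff_lt]; omega
      have d2 : k.descFactorial (m 1) ≠ 0 := by
        rw [Ne, Nat.descFactorial_eq_zero_iff_lt]; omega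
      have : R.coeff m = 0 := by
        rcases mul_eq_zero.mp h with h' | h'
        · exact h'
        · exact absurd h' (mul_ne_zero (Nat.cast_ne_zero.mpr d1) (Nat.cast_ne_zero.mpr d2))
      exact (MvPolynomial.mem_support_iff.mp hm) this
  have stepB : ∀ m, m ∉ R.support := by
    intro m hm
    obtain ⟨hb0, hb1⟩ := hinbox m hm
    have hm1 : m 1 = k := stepA m hm
    have h := hsum (fe (k - m 0) 0)
    rw [Finset.sum_eq_single_of_mem m hm ?side] at h
    case side =>
      intro m' hm' hne'
      obtain ⟨hb0', hb1'⟩ := hinbox m' hm'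
      have hm1' : m' 1 = k := stepA m' hm'
      rw [monoDeriv_f, coeff_add, coeff_monomial, coeff_monomial, if_neg ?n1]
      case n1 =>
        intro he
        obtain ⟨e0, e1⟩ := fe_inj he
        apply hne'
        rw [← fe_eq m', ← fe_eq m]
        have h5 : m' 0 = m 0 := by omega
        have h6 : m' 1 = m 1 := by omega
        rw [h5, h6]
      have hd0 : ((0:ℕ).descFactorial (m' 1) : ℂ) = 0 := by
        rw [hm1']
        rw [Nat.descFactorial_eq_zero_iff_lt.mpr (by omega)]
        simp
      rw [hd0, mul_zero, ite_self, zero_add, mul_zero]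
    · rw [monoDeriv_f, coeff_add, coeff_monomial, coeff_monomial, if_pos ?p1] at h
      case p1 => rw [hm1, Nat.sub_self]
      have hd0 : ((0:ℕ).descFactorial (m 1) : ℂ) = 0 := by
        rw [hm1, Nat.descFactorial_eq_zero_iff_lt.mpr (by omega)]
        simp
      rw [hd0, mul_zero, ite_self, add_zero] at h
      have d1 : k.descFactorial (m 0) ≠ 0 := by
        rw [Ne, Nat.descFactorial_eq_zero_iff_lt]; omega
      have d2 : k.descFactorial (m 1) ≠ 0 := by
        rw [Ne, Nat.descFactorial_eq_zero_iff_lt]; omega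
      have : R.coeff m = 0 := by
        rcases mul_eq_zero.mp h with h' | h'
        · exact h'
        · exact absurd h' (mul_ne_zero (Nat.cast_ne_zero.mpr d1) (Nat.cast_ne_zero.mpr d2))
      exact (MvPolynomial.mem_support_iff.mp hm) this
  rw [← MvPolynomial.support_eq_empty]
  exact Finset.eq_empty_iff_forall_notMem.mpr stepB

end K
end Stmt5Aux

/-- For `k ≥ 2`, the apolar ideal of `x^k y^k + x^{2k}` is
`(Y^{k+1}, X^{k+1} − binom(2k,k)·X Y^k)`. -/
theorem stmt5 (k : ℕ) (hk : 2 ≤ k) :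
    {D : MvPolynomial (Fin 2) ℂ |
        apolarAct D ((X 0) ^ k * (X 1) ^ k + (X 0) ^ (2 * k)) = 0} =
      (Ideal.span {(X 1 : MvPolynomial (Fin 2) ℂ) ^ (k+1),
          (X 0) ^ (k+1) - C ((Nat.choose (2*k) k : ℂ)) * (X 0 * (X 1) ^ k)} :
        Set (MvPolynomial (Fin 2) ℂ)) := by
  ext D
  simp only [Set.mem_setOf_eq, SetLike.mem_coe]
  set I := Ideal.span {(X 1 : MvPolynomial (Fin 2) ℂ) ^ (k+1),
      (X 0) ^ (k+1) - C ((Nat.choose (2*k) k : ℂ)) * (X 0 * (X 1) ^ k)} with hI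
  let J : Ideal (MvPolynomial (Fin 2) ℂ) :=
    { carrier := {E | apolarAct E ((X 0 : MvPolynomial (Fin 2) ℂ) ^ k * X 1 ^ k + X 0 ^ (2*k)) = 0}
      add_mem' := fun {a b} ha hb => by
        simp only [Set.mem_setOf_eq] at *
        rw [Stmt5Aux.apolarAct_add_left, ha, hb, add_zero]
      zero_mem' := by
        simp only [Set.mem_setOf_eq]
        rw [Stmt5Aux.apolarAct_eq]
        simp
      smul_mem' := fun c x hx => by
        simp only [Set.mem_setOf_eq, smul_eq_mul] at *
        rw [Stmt5Aux.apolarAct_mul, hx, Stmt5Aux.apolarAct_zero_right] }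
  have hle : I ≤ J := by
    rw [hI]
    refine Ideal.span_le.mpr ?_
    intro x hx
    simp only [Set.mem_insert_iff, Set.mem_singleton_iff] at hx
    rcases hx with rfl | rfl
    · exact Stmt5Aux.ann_g1 k
    · exact Stmt5Aux.ann_g2 k hk
  constructor
  · intro hD
    have h1 := Stmt5Aux.sub_rD_mem_span k hk D
    have h2 : apolarAct (Stmt5Aux.rD k D)
        ((X 0 : MvPolynomial (Fin 2) ℂ) ^ k * X 1 ^ k + X 0 ^ (2*k)) = 0 := by
      have h3 : Stmt5Aux.rD k D = D - (D - Stmt5Aux.rD k D) := by ring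
      rw [h3, Stmt5Aux.apolarAct_sub_left, hD, hle h1, sub_zero]
    have h4 : Stmt5Aux.rD k D = 0 :=
      Stmt5Aux.inj_box k hk _ (fun m' h => Stmt5Aux.coeff_rD_box k D m' h) h2
    have h5 : D = D - Stmt5Aux.rD k D := by rw [h4, sub_zero]
    rw [h5]
    exact h1
  · intro hD
    exact hle hD
end

section
/- Let k ≥ 2. The Waring rank of the binary form f = x^k y^k + x^{2k} over ℂ equals k+1. -/
open MvPolynomial

/-- The linear form with coefficient vector `a`. -/
noncomputable def linForm {n : ℕ} (a : Fin n → ℂ) : MvPolynomial (Fin n) ℂ :=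
  ∑ j, C (a j) * X j

/-- The Waring rank of a degree-`d` form `f`: the least `r` such that `f` is a
linear combination of `r` `d`-th powers of linear forms. -/
noncomputable def waringRank {n : ℕ} (d : ℕ) (f : MvPolynomial (Fin n) ℂ) : ℕ :=
  sInf {r : ℕ | ∃ (a : Fin r → Fin n → ℂ) (c : Fin r → ℂ),
    f = ∑ i, c i • (linForm (a i)) ^ d}

open Finset


lemma single_eq_iff {d i m : ℕ} :
    (Finsupp.single (0 : Fin 2) i + Finsupp.single (1 : Fin 2) (d - i)
      = Finsupp.single (0 : Fin 2) m + Finsupp.single (1 : Fin 2) (d - m)) ↔ i = m := by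
  constructor
  · intro h
    have := DFunLike.congr_fun h (0 : Fin 2)
    simpa using this
  · rintro rfl; rfl

lemma coeff_pow_linear (a b : ℂ) (d m : ℕ) (hm : m ≤ d) :
    coeff (Finsupp.single 0 m + Finsupp.single 1 (d - m))
      ((C a * X 0 + C b * X 1) ^ d : MvPolynomial (Fin 2) ℂ)
      = (d.choose m : ℂ) * a ^ m * b ^ (d - m) := by
  rw [add_pow, coeff_sum]
  have hterm : ∀ i, (C a * X (0:Fin 2)) ^ i * (C b * X 1) ^ (d - i) * (d.choose i : MvPolynomial (Fin 2) ℂ)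
      = monomial (Finsupp.single 0 i + Finsupp.single 1 (d - i)) ((d.choose i : ℂ) * a ^ i * b ^ (d - i)) := by
    intro i
    rw [mul_pow, mul_pow, ← C_pow, ← C_pow, ← C_eq_coe_nat,
      X_pow_eq_monomial, X_pow_eq_monomial]
    rw [show (C (a^i) * monomial (Finsupp.single (0:Fin 2) i) 1) * (C (b^(d-i)) * monomial (Finsupp.single (1:Fin 2) (d-i)) 1) * C ((d.choose i : ℂ))
      = C ((d.choose i : ℂ) * a ^ i * b ^ (d - i)) * (monomial (Finsupp.single (0:Fin 2) i) 1 * monomial (Finsupp.single (1:Fin 2) (d-i)) 1) by ring_nf; rw [map_mul, map_mul]; ring]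
    rw [monomial_mul, C_mul_monomial]; ring_nf
  rw [Finset.sum_congr rfl fun i _ => congrArg _ (hterm i)]
  rw [Finset.sum_eq_single m]
  · rw [coeff_monomial, if_pos rfl]
  · intro i _ hne
    rw [coeff_monomial, if_neg (fun h => hne (single_eq_iff.mp h))]
  · intro h; exact absurd (Finset.mem_range.mpr (Nat.lt_succ_of_le hm)) h

lemma coeff_target (k m : ℕ) (hk : 1 ≤ k) (hm : m ≤ 2 * k) :
    coeff (Finsupp.single 0 m + Finsupp.single 1 (2 * k - m))
      ((X 0) ^ k * (X 1) ^ k + (X 0) ^ (2 * k) : MvPolynomial (Fin 2) ℂ)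
      = (if m = k then 1 else 0) + (if m = 2 * k then 1 else 0) := by
  have h1 : ((X 0) ^ k * (X 1) ^ k : MvPolynomial (Fin 2) ℂ)
      = monomial (Finsupp.single 0 k + Finsupp.single 1 (2 * k - k)) 1 := by
    have h : 2 * k - k = k := by omega
    rw [h, X_pow_eq_monomial, X_pow_eq_monomial, monomial_mul, one_mul]
  have h2 : ((X 0) ^ (2*k) : MvPolynomial (Fin 2) ℂ)
      = monomial (Finsupp.single 0 (2*k) + Finsupp.single 1 (2 * k - 2*k)) 1 := by
    have h : 2 * k - 2 * k = 0 := by omega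
    rw [h, X_pow_eq_monomial, Finsupp.single_zero, add_zero]
  rw [h1, h2, coeff_add, coeff_monomial, coeff_monomial]
  congr 1
  · by_cases h : m = k
    · subst h; rw [if_pos rfl, if_pos rfl]
    · rw [if_neg (fun hh => h (single_eq_iff.mp hh).symm), if_neg h]
  · by_cases h : m = 2*k
    · subst h; rw [if_pos rfl, if_pos rfl]
    · rw [if_neg (fun hh => h (single_eq_iff.mp hh).symm), if_neg h]

lemma linForm_two (a : Fin 2 → ℂ) : linForm a = C (a 0) * X 0 + C (a 1) * X 1 := by
  simp [linForm, Fin.sum_univ_two]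

lemma moments {k r : ℕ} (a : Fin r → Fin 2 → ℂ) (c : Fin r → ℂ)
    (hf : ((X 0) ^ k * (X 1) ^ k + (X 0) ^ (2 * k) : MvPolynomial (Fin 2) ℂ)
      = ∑ i, c i • (linForm (a i)) ^ (2 * k))
    (hk : 1 ≤ k) (m : ℕ) (hm : m ≤ 2 * k) :
    ∑ i, c i * (((2 * k).choose m : ℂ) * ((a i 0) ^ m * (a i 1) ^ (2 * k - m)))
      = (if m = k then 1 else 0) + (if m = 2 * k then 1 else 0) := by
  have := congrArg (coeff (Finsupp.single 0 m + Finsupp.single 1 (2 * k - m))) hf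
  rw [coeff_target k m hk hm, coeff_sum] at this
  rw [this]
  apply Finset.sum_congr rfl
  intro i _
  rw [coeff_smul, linForm_two, coeff_pow_linear _ _ _ _ hm]
  rw [smul_eq_mul]
  ring


lemma mrank_add_le {n : Type*} [Fintype n] (A B : Matrix n n ℂ) :
    (A + B).rank ≤ A.rank + B.rank := by
  rw [Matrix.rank, Matrix.rank, Matrix.rank, Matrix.mulVecLin_add]
  have h : LinearMap.range (A.mulVecLin + B.mulVecLin)
      ≤ LinearMap.range A.mulVecLin ⊔ LinearMap.range B.mulVecLin := by
    rintro x ⟨y, rfl⟩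
    exact Submodule.mem_sup.mpr ⟨A.mulVecLin y, ⟨y, rfl⟩, B.mulVecLin y, ⟨y, rfl⟩, rfl⟩
  exact (Submodule.finrank_mono h).trans (Submodule.finrank_add_le_finrank_add_finrank _ _)

lemma mrank_vecMulVec_le {n : Type*} [Fintype n] (w v : n → ℂ) :
    (Matrix.vecMulVec w v).rank ≤ 1 := by
  rw [Matrix.vecMulVec_eq Unit]
  exact (Matrix.rank_mul_le_left _ _).trans ((Matrix.rank_le_card_width _).trans (by simp))

lemma mrank_sum_le {n : Type*} [Fintype n] {r : ℕ} (A : Fin r → Matrix n n ℂ)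
    (h : ∀ t, (A t).rank ≤ 1) : (∑ t, A t).rank ≤ r := by
  induction r with
  | zero => simp
  | succ r ih =>
    rw [Fin.sum_univ_castSucc]
    exact (mrank_add_le _ _).trans
      (add_le_add (ih _ (fun t => h _)) (h _))

lemma rank_special {k : ℕ} (hk : 1 ≤ k) (e : ℂ) (he : e ≠ 0) :
    (Matrix.of fun i j : Fin (k+1) =>
      if (i:ℕ)+(j:ℕ) = k then e else if (i:ℕ)+(j:ℕ) = 2*k then 1 else 0).rank = k+1 := by
  set M : Matrix (Fin (k+1)) (Fin (k+1)) ℂ := Matrix.of fun i j : Fin (k+1) =>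
      if (i:ℕ)+(j:ℕ) = k then e else if (i:ℕ)+(j:ℕ) = 2*k then 1 else 0 with hM
  have hinj : Function.Injective M.mulVecLin := by
    rw [← LinearMap.ker_eq_bot, Submodule.eq_bot_iff]
    intro x hx
    rw [LinearMap.mem_ker, Matrix.mulVecLin_apply] at hx
    have hrow : ∀ i : Fin (k+1), ∑ j, M i j * x j = 0 := by
      intro i
      have := congrFun hx i
      simpa [Matrix.mulVec, dotProduct] using this
    have hpos : ∀ j : Fin (k+1), 1 ≤ (j:ℕ) → x j = 0 := by
      intro j hj
      have hi : k - (j:ℕ) < k + 1 := by omega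
      have h := hrow ⟨k - (j:ℕ), hi⟩
      rw [Finset.sum_eq_single j] at h
      · have hcond : (k - (j:ℕ)) + (j:ℕ) = k := by omega
        rw [hM] at h
        simp only [Matrix.of_apply] at h
        rw [if_pos hcond] at h
        exact (mul_eq_zero.mp h).resolve_left he
      · intro j' _ hne
        rw [hM]
        simp only [Matrix.of_apply]
        have h1 : ¬ ((k - (j:ℕ)) + (j':ℕ) = k) := by
          intro hcc
          apply hne
          have : (j':ℕ) = (j:ℕ) := by omega
          exact Fin.ext this
        have h2 : ¬ ((k - (j:ℕ)) + (j':ℕ) = 2*k) := by omega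
        rw [if_neg h1, if_neg h2, zero_mul]
      · intro hmem; exact absurd (Finset.mem_univ j) hmem
    have hxk : x (Fin.last k) = 0 := by
      apply hpos
      simp [Fin.last]
      omega
    have hx0 : x 0 = 0 := by
      have h := hrow (Fin.last k)
      rw [Finset.sum_eq_single (0 : Fin (k+1))] at h
      · have hcond : ((Fin.last k : Fin (k+1)):ℕ) + ((0 : Fin (k+1)):ℕ) = k := by
          simp [Fin.last]
        rw [hM] at h
        simp only [Matrix.of_apply] at h
        rw [if_pos hcond] at h
        exact (mul_eq_zero.mp h).resolve_left he
      · intro j' _ hne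
        by_cases hjk : j' = Fin.last k
        · subst hjk
          rw [hxk, mul_zero]
        · rw [hM]
          simp only [Matrix.of_apply]
          have hj'1 : (j' : ℕ) ≠ 0 := fun hc => hne (Fin.ext hc)
          have hj'2 : (j' : ℕ) ≠ k := by
            intro hc
            exact hjk (Fin.ext (by simp [Fin.last, hc]))
          have h1 : ¬ (((Fin.last k : Fin (k+1)):ℕ) + (j':ℕ) = k) := by
            simp [Fin.last]; omega
          have h2 : ¬ (((Fin.last k : Fin (k+1)):ℕ) + (j':ℕ) = 2*k) := by
            simp [Fin.last]; omega
          rw [if_neg h1, if_neg h2, zero_mul]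
      · intro hmem; exact absurd (Finset.mem_univ _) hmem
    funext j
    rcases Nat.eq_zero_or_pos (j : ℕ) with hz | hp
    · have : j = 0 := Fin.ext hz
      rw [this]; exact hx0
    · exact hpos j hp
  rw [Matrix.rank, LinearMap.finrank_range_of_inj hinj]
  simp

lemma lower_bound {k r : ℕ} (hk : 2 ≤ k) (a : Fin r → Fin 2 → ℂ) (c : Fin r → ℂ)
    (hf : ((X 0) ^ k * (X 1) ^ k + (X 0) ^ (2 * k) : MvPolynomial (Fin 2) ℂ)
      = ∑ i, c i • (linForm (a i)) ^ (2 * k)) : k + 1 ≤ r := by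
  by_contra hcon
  push_neg at hcon
  have hrk : r ≤ k := by omega
  set u : Fin r → Fin (k+1) → ℂ := fun t j => a t 0 ^ (j:ℕ) * a t 1 ^ (k - (j:ℕ)) with hu
  set M : Matrix (Fin (k+1)) (Fin (k+1)) ℂ := ∑ t, Matrix.vecMulVec (c t • u t) (u t) with hMdef
  have hCh : ((2*k).choose k : ℂ) ≠ 0 := by
    exact_mod_cast Nat.cast_ne_zero.mpr (Nat.choose_pos (by omega)).ne'
  have hentry : M = Matrix.of fun i j : Fin (k+1) =>
      if (i:ℕ)+(j:ℕ) = k then ((2*k).choose k : ℂ)⁻¹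
      else if (i:ℕ)+(j:ℕ) = 2*k then 1 else 0 := by
    ext i j
    have hij : (i:ℕ) + (j:ℕ) ≤ 2 * k := by
      have := Fin.is_le i; have := Fin.is_le j; omega
    have hMij : M i j = ∑ t, c t * (a t 0 ^ ((i:ℕ)+(j:ℕ)) * a t 1 ^ (2*k - ((i:ℕ)+(j:ℕ)))) := by
      rw [hMdef]
      rw [Matrix.sum_apply]
      apply Finset.sum_congr rfl
      intro t _
      rw [Matrix.vecMulVec_apply, hu]
      simp only [Pi.smul_apply, smul_eq_mul]
      have e1 : a t 0 ^ (i:ℕ) * a t 0 ^ (j:ℕ) = a t 0 ^ ((i:ℕ)+(j:ℕ)) := (pow_add _ _ _).symm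
      have e2 : a t 1 ^ (k - (i:ℕ)) * a t 1 ^ (k - (j:ℕ)) = a t 1 ^ (2*k - ((i:ℕ)+(j:ℕ))) := by
        rw [← pow_add]
        congr 1
        have := Fin.is_le i; have := Fin.is_le j; omega
      calc c t * (a t 0 ^ (i:ℕ) * a t 1 ^ (k - (i:ℕ))) * (a t 0 ^ (j:ℕ) * a t 1 ^ (k - (j:ℕ)))
          = c t * ((a t 0 ^ (i:ℕ) * a t 0 ^ (j:ℕ)) * (a t 1 ^ (k - (i:ℕ)) * a t 1 ^ (k - (j:ℕ)))) := by ring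
        _ = _ := by rw [e1, e2]
    have hmom := moments a c hf (by omega) ((i:ℕ)+(j:ℕ)) hij
    have hfac : ∑ t, c t * (((2 * k).choose ((i:ℕ)+(j:ℕ)) : ℂ) * (a t 0 ^ ((i:ℕ)+(j:ℕ)) * a t 1 ^ (2*k - ((i:ℕ)+(j:ℕ)))))
        = ((2 * k).choose ((i:ℕ)+(j:ℕ)) : ℂ) * M i j := by
      rw [hMij, Finset.mul_sum]
      apply Finset.sum_congr rfl
      intro t _
      ring
    rw [hfac] at hmom
    simp only [Matrix.of_apply]
    by_cases h1 : (i:ℕ)+(j:ℕ) = k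
    · rw [if_pos h1]
      rw [h1] at hmom
      rw [if_pos rfl, if_neg (by omega : ¬ k = 2*k)] at hmom
      field_simp
      linear_combination hmom
    · rw [if_neg h1]
      by_cases h2 : (i:ℕ)+(j:ℕ) = 2*k
      · rw [if_pos h2]
        rw [h2] at hmom
        rw [if_neg (by omega : ¬ 2*k = k), if_pos rfl, Nat.choose_self] at hmom
        simpa using hmom
      · rw [if_neg h2]
        rw [if_neg h1, if_neg h2] at hmom
        have hch2 : ((2 * k).choose ((i:ℕ)+(j:ℕ)) : ℂ) ≠ 0 := by
          exact_mod_cast Nat.cast_ne_zero.mpr (Nat.choose_pos hij).ne'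
        simp only [add_zero] at hmom
        rcases mul_eq_zero.mp hmom with h | h
        · exact absurd h hch2
        · exact h
  have hr1 : M.rank ≤ r := by
    rw [hMdef]
    apply mrank_sum_le
    intro t
    exact mrank_vecMulVec_le _ _
  rw [hentry, rank_special (by omega) _ (inv_ne_zero hCh)] at hr1
  omega

lemma root_sum {k : ℕ} (hk : 1 ≤ k) {ζ : ℂ} (hζ : IsPrimitiveRoot ζ k) (m : ℕ) :
    ∑ j ∈ Finset.range k, (ζ ^ j) ^ m = if k ∣ m then (k : ℂ) else 0 := by
  have hsum : ∀ j, (ζ ^ j) ^ m = (ζ ^ m) ^ j := fun j => by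
    rw [← pow_mul, ← pow_mul, Nat.mul_comm]
  rw [Finset.sum_congr rfl fun j _ => hsum j]
  by_cases hdvd : k ∣ m
  · rw [if_pos hdvd, (hζ.pow_eq_one_iff_dvd m).mpr hdvd]
    simp
  · rw [if_neg hdvd]
    have hne : ζ ^ m ≠ 1 := fun h => hdvd ((hζ.pow_eq_one_iff_dvd m).mp h)
    rw [geom_sum_eq hne]
    have : (ζ ^ m) ^ k = 1 := by
      rw [← pow_mul, Nat.mul_comm, pow_mul, hζ.pow_eq_one, one_pow]
    rw [this, sub_self, zero_div]

lemma expand_sum {k : ℕ} (hk : 2 ≤ k) {ζ ω cc : ℂ} (hζ : IsPrimitiveRoot ζ k)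
    (hω : ω ^ k = cc) (hcc : ((2*k).choose k : ℂ) = cc) :
    ∑ j ∈ Finset.range k, ((C (ω * ζ ^ j) * X 0 + X 1 : MvPolynomial (Fin 2) ℂ)) ^ (2 * k)
      = C (k : ℂ) * (X 1) ^ (2 * k)
        + C ((k : ℂ) * cc ^ 2) * ((X 0) ^ k * (X 1) ^ k)
        + C ((k : ℂ) * cc ^ 2) * (X 0) ^ (2 * k) := by
  have hterm : ∀ j ∈ Finset.range k,
      ((C (ω * ζ ^ j) * X 0 + X 1 : MvPolynomial (Fin 2) ℂ)) ^ (2 * k)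
        = ∑ m ∈ Finset.range (2 * k + 1),
            C ((ω * ζ ^ j) ^ m * ((2 * k).choose m : ℂ)) * ((X 0) ^ m * (X 1) ^ (2 * k - m)) := by
    intro j _
    rw [add_pow]
    apply Finset.sum_congr rfl
    intro m _
    rw [mul_pow, ← C_pow, ← C_eq_coe_nat, map_mul]
    ring
  rw [Finset.sum_congr rfl hterm, Finset.sum_comm]
  have hinner : ∀ m ∈ Finset.range (2 * k + 1),
      (∑ j ∈ Finset.range k,
        C ((ω * ζ ^ j) ^ m * ((2 * k).choose m : ℂ)) * ((X 0) ^ m * (X 1) ^ (2 * k - m)) : MvPolynomial (Fin 2) ℂ)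
      = C ((if k ∣ m then (k:ℂ) else 0) * ω ^ m * ((2 * k).choose m : ℂ))
          * ((X 0) ^ m * (X 1) ^ (2 * k - m)) := by
    intro m _
    rw [← Finset.sum_mul, ← map_sum]
    congr 2
    have : ∀ j, (ω * ζ ^ j) ^ m * ((2 * k).choose m : ℂ)
        = (ζ ^ j) ^ m * (ω ^ m * ((2 * k).choose m : ℂ)) := by
      intro j; rw [mul_pow]; ring
    rw [Finset.sum_congr rfl fun j _ => this j, ← Finset.sum_mul, root_sum (by omega) hζ m]
    ring
  rw [Finset.sum_congr rfl hinner]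
  rw [← Finset.sum_subset (show ({0, k, 2*k} : Finset ℕ) ⊆ Finset.range (2*k+1) by
    intro x hx
    simp only [Finset.mem_insert, Finset.mem_singleton] at hx
    rcases hx with rfl | rfl | rfl <;> simp [Finset.mem_range] <;> omega)]
  · have h0k : (0 : ℕ) ∉ ({k, 2*k} : Finset ℕ) := by
      simp only [Finset.mem_insert, Finset.mem_singleton]
      omega
    have hkk : k ∉ ({2*k} : Finset ℕ) := by
      simp only [Finset.mem_singleton]; omega
    rw [show ({0, k, 2*k} : Finset ℕ) = insert 0 (insert k {2*k}) from rfl,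
      Finset.sum_insert h0k, Finset.sum_insert hkk, Finset.sum_singleton]
    rw [if_pos (dvd_zero k), if_pos (dvd_refl k), if_pos (dvd_mul_left k 2)]
    have e1 : ω ^ (2*k) = cc ^ 2 := by rw [two_mul, pow_add, hω]; ring
    have e2 : ((2*k).choose (2*k) : ℂ) = 1 := by rw [Nat.choose_self]; simp
    have e3 : ((2*k).choose 0 : ℂ) = 1 := by simp
    have e4 : (2*k) - k = k := by omega
    have e5 : (k:ℂ) * ω ^ 0 * 1 = (k:ℂ) := by simp
    have e6 : (k:ℂ) * ω ^ k * ((2*k).choose k : ℂ) = (k:ℂ) * cc ^ 2 := by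
      rw [hω, hcc]; ring
    have e7 : (k:ℂ) * cc ^ 2 * 1 = (k:ℂ) * cc ^ 2 := by ring
    rw [e1, e2, e3, e4, e5, e6, e7, Nat.sub_zero, Nat.sub_self, pow_zero, pow_zero]
    ring
  · intro m hm hnotin
    have hm' : m ∈ Finset.range (2*k+1) := hm
    rw [Finset.mem_range] at hm'
    have : ¬ k ∣ m := by
      intro hdvd
      rcases hdvd with ⟨t, rfl⟩
      simp only [Finset.mem_insert, Finset.mem_singleton] at hnotin
      push_neg at hnotin
      have ht2 : t ≤ 2 := by
        by_contra hgt
        push_neg at hgt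
        have : k * 3 ≤ k * t := Nat.mul_le_mul_left k hgt
        omega
      interval_cases t <;> omega
    rw [if_neg this]
    simp

lemma upper_bound {k : ℕ} (hk : 2 ≤ k) :
    ∃ (a : Fin (k+1) → Fin 2 → ℂ) (c : Fin (k+1) → ℂ),
      ((X 0) ^ k * (X 1) ^ k + (X 0) ^ (2 * k) : MvPolynomial (Fin 2) ℂ)
        = ∑ i, c i • (linForm (a i)) ^ (2 * k) := by
  have hk0 : (k : ℕ) ≠ 0 := by omega
  set cc : ℂ := ((2*k).choose k : ℂ) with hccdef
  have hcc0 : cc ≠ 0 := by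
    rw [hccdef]
    exact_mod_cast Nat.cast_ne_zero.mpr (Nat.choose_pos (by omega)).ne'
  set ω : ℂ := cc ^ ((k : ℂ)⁻¹) with hωdef
  have hω : ω ^ k = cc := Complex.cpow_nat_inv_pow cc hk0
  set ζ : ℂ := Complex.exp (2 * Real.pi * Complex.I / k) with hζdef
  have hζ : IsPrimitiveRoot ζ k := Complex.isPrimitiveRoot_exp k hk0
  refine ⟨fun i => if (i:ℕ) < k then ![ω * ζ ^ (i:ℕ), 1] else ![0, 1],
    fun i => if (i:ℕ) < k then ((k:ℂ) * cc ^ 2)⁻¹ else -(cc ^ 2)⁻¹, ?_⟩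
  rw [Fin.sum_univ_castSucc]
  simp only [Fin.coe_castSucc, Fin.val_last]
  have hterm : ∀ i : Fin k,
      (if (i:ℕ) < k then ((k:ℂ) * cc ^ 2)⁻¹ else -(cc ^ 2)⁻¹)
        • (linForm (if (i:ℕ) < k then ![ω * ζ ^ (i:ℕ), 1] else ![0, 1])) ^ (2*k)
      = ((k:ℂ) * cc ^ 2)⁻¹ • ((C (ω * ζ ^ (i:ℕ)) * X 0 + X 1 : MvPolynomial (Fin 2) ℂ)) ^ (2*k) := by
    intro i
    rw [if_pos i.isLt, if_pos i.isLt, linForm_two]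
    simp only [Matrix.cons_val_zero, Matrix.cons_val_one, Matrix.head_cons, map_one, one_mul]
  rw [Finset.sum_congr rfl (fun i _ => hterm i)]
  have hlastterm :
      (if k < k then ((k:ℂ) * cc ^ 2)⁻¹ else -(cc ^ 2)⁻¹)
        • (linForm (if k < k then ![ω * ζ ^ k, 1] else ![0, 1])) ^ (2*k)
      = (-(cc ^ 2)⁻¹) • ((X 1 : MvPolynomial (Fin 2) ℂ)) ^ (2*k) := by
    rw [if_neg (lt_irrefl k), if_neg (lt_irrefl k), linForm_two]
    simp
  rw [hlastterm, ← Finset.smul_sum]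
  have hrange : ∑ i : Fin k, ((C (ω * ζ ^ (i:ℕ)) * X 0 + X 1 : MvPolynomial (Fin 2) ℂ)) ^ (2*k)
      = ∑ j ∈ Finset.range k, ((C (ω * ζ ^ j) * X 0 + X 1 : MvPolynomial (Fin 2) ℂ)) ^ (2*k) :=
    Fin.sum_univ_eq_sum_range (fun j => ((C (ω * ζ ^ j) * X 0 + X 1 : MvPolynomial (Fin 2) ℂ)) ^ (2*k)) k
  rw [hrange, expand_sum hk hζ hω hccdef.symm]
  rw [smul_eq_C_mul, smul_eq_C_mul]
  have h1 : C (((k:ℂ) * cc ^ 2)⁻¹) * C (k:ℂ) + C (-(cc ^ 2)⁻¹) = (0 : MvPolynomial (Fin 2) ℂ) := by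
    rw [← map_mul, ← map_add, ← map_zero (C : ℂ →+* MvPolynomial (Fin 2) ℂ)]
    congr 1
    have hkc : (k:ℂ) * cc ^ 2 ≠ 0 := mul_ne_zero (Nat.cast_ne_zero.mpr hk0) (pow_ne_zero 2 hcc0)
    field_simp
    ring
  have h2 : C (((k:ℂ) * cc ^ 2)⁻¹) * C ((k:ℂ) * cc ^ 2) = (1 : MvPolynomial (Fin 2) ℂ) := by
    rw [← map_mul, ← map_one (C : ℂ →+* MvPolynomial (Fin 2) ℂ)]
    congr 1
    have hkc : (k:ℂ) * cc ^ 2 ≠ 0 := mul_ne_zero (Nat.cast_ne_zero.mpr hk0) (pow_ne_zero 2 hcc0)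
    field_simp
  linear_combination (-(X 0 ^ k * X 1 ^ k + X 0 ^ (2*k) : MvPolynomial (Fin 2) ℂ)) * h2
    + (-(X 1 ^ (2*k) : MvPolynomial (Fin 2) ℂ)) * h1


/-- For `k ≥ 2`, the Waring rank of `x^k y^k + x^{2k}` equals `k + 1`. -/
theorem stmt6 (k : ℕ) (hk : 2 ≤ k) :
    waringRank (2 * k) ((X 0) ^ k * (X 1) ^ k + (X 0) ^ (2 * k) : MvPolynomial (Fin 2) ℂ) =
      k + 1 := by
  have hmem : (k + 1) ∈ {r : ℕ | ∃ (a : Fin r → Fin 2 → ℂ) (c : Fin r → ℂ),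
      ((X 0) ^ k * (X 1) ^ k + (X 0) ^ (2 * k) : MvPolynomial (Fin 2) ℂ)
        = ∑ i, c i • (linForm (a i)) ^ (2 * k)} := upper_bound hk
  apply le_antisymm
  · exact Nat.sInf_le hmem
  · apply le_csInf ⟨k + 1, hmem⟩
    rintro r ⟨a, c, hf⟩
    exact lower_bound hk a c hf
end

section
/- The binary monomial g = x^k y^k (k ≥ 1) admits an irredundant Waring decomposition of length k+2. -/
open MvPolynomial

lemma expand_pow (β : ℂ) (d : ℕ) :
    (X 0 + C β * X 1 : MvPolynomial (Fin 2) ℂ) ^ d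
      = ∑ j ∈ Finset.range (d+1),
          C ((d.choose j : ℂ) * β ^ (d - j)) * (X 0) ^ j * (X 1) ^ (d - j) := by
  rw [add_pow]
  refine Finset.sum_congr rfl fun j hj => ?_
  rw [mul_pow, ← C_pow, C_mul, ← C_eq_coe_nat]
  ring

lemma sum_expand {n : ℕ} (d : ℕ) (e b : Fin n → ℂ) :
    ∑ i, e i • (X 0 + C (b i) * X 1 : MvPolynomial (Fin 2) ℂ) ^ d
      = ∑ j ∈ Finset.range (d+1),
          C ((d.choose j : ℂ) * ∑ i, e i * (b i) ^ (d - j)) * (X 0) ^ j * (X 1) ^ (d - j) := by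
  simp_rw [expand_pow, smul_eq_C_mul, Finset.mul_sum]
  rw [Finset.sum_comm]
  refine Finset.sum_congr rfl fun j hj => ?_
  rw [map_sum, Finset.sum_mul, Finset.sum_mul]
  refine Finset.sum_congr rfl fun i hi => ?_
  rw [C_mul, C_mul, C_mul]
  ring

lemma coeff_extract (d : ℕ) (t : ℕ → ℂ) (j₀ : ℕ) (hj₀ : j₀ ∈ Finset.range (d+1)) :
    coeff (Finsupp.single 0 j₀ + Finsupp.single 1 (d - j₀))
      (∑ j ∈ Finset.range (d+1), C (t j) * (X 0 : MvPolynomial (Fin 2) ℂ) ^ j * (X 1) ^ (d - j))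
      = t j₀ := by
  rw [coeff_sum]
  have hterm : ∀ j, C (t j) * (X 0 : MvPolynomial (Fin 2) ℂ) ^ j * (X 1) ^ (d - j)
      = monomial (Finsupp.single 0 j + Finsupp.single 1 (d - j)) (t j) := by
    intro j
    rw [X_pow_eq_monomial, X_pow_eq_monomial, mul_assoc, monomial_mul, one_mul,
      C_apply, monomial_mul, zero_add, mul_one]
  simp_rw [hterm, coeff_monomial]
  rw [Finset.sum_eq_single j₀]
  · simp
  · intro j hj hne
    rw [if_neg]
    intro h
    apply hne
    have := congrArg (fun f : Fin 2 →₀ ℕ => f 0) h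
    simpa using this
  · intro h; exact absurd hj₀ h

lemma indep (n d : ℕ) (hnd : n ≤ d + 1) (ω : ℂ)
    (hinj : Function.Injective fun i : Fin n => ω ^ (i : ℕ))
    (e : Fin n → ℂ)
    (h : ∑ i, e i • (X 0 + C (ω ^ (i : ℕ)) * X 1 : MvPolynomial (Fin 2) ℂ) ^ d = 0) :
    e = 0 := by
  rw [sum_expand] at h
  have hS : ∀ m, m ≤ d → ∑ i, e i * (ω ^ (i : ℕ)) ^ m = 0 := by
    intro m hm
    have hj : d - m ∈ Finset.range (d + 1) := by simp [Nat.lt_succ_iff]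
    have h2 : (d.choose (d - m) : ℂ) * ∑ i, e i * (ω ^ (i : ℕ)) ^ (d - (d - m)) = 0 := by
      rw [← coeff_extract d (fun j => (d.choose j : ℂ) * ∑ i, e i * (ω ^ (i : ℕ)) ^ (d - j))
        (d - m) hj, h, coeff_zero]
    rw [Nat.sub_sub_self hm] at h2
    have hch : (d.choose (d - m) : ℂ) ≠ 0 := by
      exact_mod_cast (Nat.choose_pos (Nat.sub_le d m)).ne'
    exact (mul_eq_zero.mp h2).resolve_left hch
  apply Matrix.eq_zero_of_forall_index_sum_pow_mul_eq_zero hinj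
  intro j
  have hj := hS (j : ℕ) (by omega)
  rw [← hj]
  refine Finset.sum_congr rfl fun i _ => ?_
  rw [← pow_mul, ← pow_mul, Nat.mul_comm, mul_comm]
/-- The binary monomial `x^k y^k` (`k ≥ 1`) admits an irredundant Waring decomposition
of length `k + 2`. -/
theorem stmt8 (k : ℕ) (hk : 1 ≤ k) :
    ∃ (a : Fin (k+2) → Fin 2 → ℂ) (c : Fin (k+2) → ℂ),
      (∀ i j, i ≠ j → ∀ t : ℂ, a i ≠ t • a j) ∧
      ((X 0) ^ k * (X 1) ^ k : MvPolynomial (Fin 2) ℂ) =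
        ∑ i, c i • (linForm (a i)) ^ (2 * k) ∧
      ∀ S : Finset (Fin (k+2)), S ≠ Finset.univ →
        ¬ ∃ c' : Fin (k+2) → ℂ,
          ((X 0) ^ k * (X 1) ^ k : MvPolynomial (Fin 2) ℂ) =
            ∑ i ∈ S, c' i • (linForm (a i)) ^ (2 * k) := by
  have hn0 : k + 2 ≠ 0 := by omega
  obtain ⟨ω, hprim⟩ : ∃ ω : ℂ, IsPrimitiveRoot ω (k + 2) :=
    ⟨_, Complex.isPrimitiveRoot_exp (k + 2) hn0⟩
  have hω0 : ω ≠ 0 := by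
    intro h
    have h1 : ω ^ (k + 2) = 1 := hprim.pow_eq_one
    rw [h, zero_pow hn0] at h1
    exact zero_ne_one h1
  have hch0 : (((2 * k).choose k : ℕ) : ℂ) ≠ 0 := by
    exact_mod_cast (Nat.choose_pos (by omega)).ne'
  have hnC : ((k + 2 : ℕ) : ℂ) ≠ 0 := by exact_mod_cast hn0
  set D : ℂ := ((k + 2 : ℕ) : ℂ) * (((2 * k).choose k : ℕ) : ℂ) with hD
  have hD0 : D ≠ 0 := mul_ne_zero hnC hch0
  have hlin : ∀ v : ℂ, linForm ![(1 : ℂ), v] = X 0 + C v * X 1 := by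
    intro v
    simp [linForm, Fin.sum_univ_two]
  have hpowinj : Function.Injective fun i : Fin (k + 2) => ω ^ (i : ℕ) := by
    intro i j h
    exact Fin.ext (hprim.pow_inj i.isLt j.isLt h)
  -- the coefficients
  set c : Fin (k + 2) → ℂ := fun i => (ω ^ ((i : ℕ) * k))⁻¹ / D with hc
  have hc0 : ∀ i, c i ≠ 0 := fun i =>
    div_ne_zero (inv_ne_zero (pow_ne_zero _ hω0)) hD0
  -- geometric sum computation
  have hT : ∀ j ≤ (2 * k), ∑ i : Fin (k + 2), c i * (ω ^ (i : ℕ)) ^ ((2 * k) - j)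
      = (∑ i ∈ Finset.range (k + 2), (ω ^ ((2 * k) - j) * (ω ^ k)⁻¹) ^ i) / D := by
    intro j hj
    simp only [hc]
    rw [Fin.sum_univ_eq_sum_range (fun i => (ω ^ (i * k))⁻¹ / D * (ω ^ i) ^ ((2 * k) - j)) (k + 2)]
    rw [Finset.sum_div]
    refine Finset.sum_congr rfl fun i hi => ?_
    rw [mul_pow, inv_pow, ← pow_mul, ← pow_mul, ← pow_mul, Nat.mul_comm k i]
    field_simp
    ring
  have hzpow : ∀ j, (ω ^ ((2 * k) - j) * (ω ^ k)⁻¹) ^ (k + 2) = 1 := by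
    intro j
    rw [mul_pow, inv_pow, ← pow_mul, ← pow_mul, Nat.mul_comm ((2 * k) - j), Nat.mul_comm k,
      pow_mul, pow_mul, hprim.pow_eq_one, one_pow, one_pow, inv_one, mul_one]
  have hzne : ∀ j ≤ (2 * k), j ≠ k → ω ^ ((2 * k) - j) * (ω ^ k)⁻¹ ≠ 1 := by
    intro j hj hjk h
    have hpow : ω ^ ((2 * k) - j) = ω ^ k := by
      field_simp at h
      exact h
    have hone : ∀ t, 0 < t → t < k + 2 → ω ^ t ≠ 1 := fun t h1 h2 =>
      hprim.pow_ne_one_of_pos_of_lt h1.ne' h2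
    rcases Nat.lt_or_ge ((2 * k) - j) k with hlt | hge
    · have h2 : ω ^ ((2 * k) - j) * ω ^ (k - ((2 * k) - j)) = ω ^ ((2 * k) - j) * 1 := by
        rw [← pow_add, mul_one, show (2 * k) - j + (k - ((2 * k) - j)) = k by omega, ← hpow]
      have h3 := mul_left_cancel₀ (pow_ne_zero _ hω0) h2
      exact hone _ (by omega) (by omega) h3
    · have hgt : k < (2 * k) - j := by omega
      have h2 : ω ^ k * ω ^ ((2 * k) - j - k) = ω ^ k * 1 := by
        rw [← pow_add, mul_one, show k + ((2 * k) - j - k) = (2 * k) - j by omega, hpow]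
      have h3 := mul_left_cancel₀ (pow_ne_zero _ hω0) h2
      exact hone _ (by omega) (by omega) h3
  -- the decomposition identity
  have hdecomp : ((X 0) ^ k * (X 1) ^ k : MvPolynomial (Fin 2) ℂ) =
      ∑ i, c i • (X 0 + C (ω ^ (i : ℕ)) * X 1 : MvPolynomial (Fin 2) ℂ) ^ (2 * k) := by
    rw [sum_expand (2 * k) c (fun i => ω ^ (i : ℕ))]
    rw [Finset.sum_eq_single_of_mem k (by simp only [Finset.mem_range]; omega)]
    · rw [hT k (by omega)]
      have hz1 : ω ^ ((2 * k) - k) * (ω ^ k)⁻¹ = 1 := by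
        rw [show (2 * k) - k = k by omega]
        exact mul_inv_cancel₀ (pow_ne_zero _ hω0)
      rw [hz1]
      simp only [one_pow, Finset.sum_const, Finset.card_range, nsmul_eq_mul, mul_one]
      rw [hD]
      rw [show ((k + 2 : ℕ) : ℂ) / (((k + 2 : ℕ) : ℂ) * (((2 * k).choose k : ℕ) : ℂ))
          = (((2 * k).choose k : ℕ) : ℂ)⁻¹ by
            rw [div_mul_eq_div_mul_one_div, div_self hnC, one_mul, one_div]]
      rw [mul_inv_cancel₀ hch0, map_one, one_mul, show (2 * k) - k = k by omega]
    · intro j hj hjk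
      rw [hT j (by simp at hj; omega)]
      rw [geom_sum_eq (hzne j (by simp at hj; omega) hjk) (k + 2), hzpow j]
      simp
  refine ⟨fun i => ![1, ω ^ (i : ℕ)], c, ?_, ?_, ?_⟩
  · -- pairwise non-proportional
    intro i j hij t h
    have h0 := congrFun h 0
    have h1 := congrFun h 1
    simp only [Matrix.cons_val_zero, Pi.smul_apply, smul_eq_mul, mul_one] at h0
    simp only [Matrix.cons_val_one, Matrix.head_cons, Pi.smul_apply, smul_eq_mul] at h1
    rw [← h0, one_mul] at h1
    exact hij (hpowinj h1)
  · simpa only [hlin] using hdecomp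
  · intro S hS ⟨c', hc'⟩
    simp only [hlin] at hc'
    obtain ⟨i₀, hi₀⟩ : ∃ i₀, i₀ ∉ S := by
      by_contra hcon
      push_neg at hcon
      exact hS (Finset.eq_univ_iff_forall.mpr hcon)
    set e : Fin (k + 2) → ℂ := fun i => c i - if i ∈ S then c' i else 0 with he
    have hsum : ∑ i, e i • (X 0 + C (ω ^ (i : ℕ)) * X 1 : MvPolynomial (Fin 2) ℂ) ^ (2 * k) = 0 := by
      have hSsum : ∑ i ∈ S, c' i • (X 0 + C (ω ^ (i : ℕ)) * X 1 : MvPolynomial (Fin 2) ℂ) ^ (2 * k)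
          = ∑ i, (if i ∈ S then c' i else 0) •
              (X 0 + C (ω ^ (i : ℕ)) * X 1 : MvPolynomial (Fin 2) ℂ) ^ (2 * k) := by
        symm
        simp only [ite_smul, zero_smul]
        rw [Finset.sum_ite_mem, Finset.univ_inter]
      simp only [he, sub_smul]
      rw [Finset.sum_sub_distrib, ← hdecomp, ← hSsum, ← hc', sub_self]
    have he0 := indep (k + 2) (2 * k) (by omega) ω hpowinj e hsum
    have : e i₀ = 0 := by rw [he0]; rfl
    rw [he] at this
    simp only [hi₀, if_neg, if_false] at this
    exact hc0 i₀ (by rwa [sub_zero] at this)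
end

section
/- Let k, n ≥ 1, let g = (x_0⋯x_n)^k, and let ℓ = a_0 x_0 + ⋯ + a_n x_n with all a_i ≠ 0. Define J ⊆ ℂ[X_0,…,X_n] to be the ideal generated by the hyperplane J_{k+1} = {F ∈ span(X_0^{k+1},…,X_n^{k+1}) : F(a_0,…,a_n) = 0}. Then J is a complete intersection ideal of the form (X_0^{k+1} − α_1 X_1^{k+1}, …, X_0^{k+1} − α_n X_n^{k+1}) with all α_i ≠ 0, and its zero set in ℙ^n consists of exactly (k+1)^n points containing the point [ℓ] = (a_0 : ⋯ : a_n). -/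
open Polynomial in
lemma aux_card_pow (m : ℕ) (hm : m ≠ 0) (β : ℂ) (hβ : β ≠ 0) :
    Nat.card {z : ℂ // z ^ m = β} = m := by
  have hp : (X ^ m - C β : ℂ[X]).Separable :=
    separable_X_pow_sub_C β (by exact_mod_cast (Nat.cast_ne_zero (R := ℂ)).2 hm) hβ
  have hs : ((X ^ m - C β : ℂ[X]).map (algebraMap ℂ ℂ)).Splits := IsAlgClosed.splits _
  have hcard := Polynomial.card_rootSet_eq_natDegree hp hs
  have hne : (X ^ m - C β : ℂ[X]) ≠ 0 := X_pow_sub_C_ne_zero (Nat.pos_of_ne_zero hm) β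
  have he : {z : ℂ // z ^ m = β} ≃ ((X ^ m - C β : ℂ[X]).rootSet ℂ) :=
    Equiv.subtypeEquivRight (by
      intro z
      rw [Polynomial.mem_rootSet]
      simp [hne, sub_eq_zero])
  rw [Nat.card_congr he, Nat.card_eq_fintype_card, hcard, natDegree_X_pow_sub_C]

open MvPolynomial

/-- The ideal `J` generated by the hyperplane of `span(X_0^{k+1},…,X_n^{k+1})`
consisting of forms vanishing at the coefficient vector of `ℓ = Σ aᵢxᵢ` (all `aᵢ ≠ 0`)
is a complete intersection `(X_0^{k+1} − α_1 X_1^{k+1}, …, X_0^{k+1} − α_n X_n^{k+1})`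
with all `αᵢ ≠ 0`, and its zero set in `ℙⁿ` consists of exactly `(k+1)ⁿ` points and
contains the point `[ℓ]`. -/
theorem stmt10 (n k : ℕ) (hn : 1 ≤ n) (hk : 1 ≤ k)
    (a : Fin (n+1) → ℂ) (ha : ∀ i, a i ≠ 0)
    (J : Ideal (MvPolynomial (Fin (n+1)) ℂ))
    (hJ : J = Ideal.span {F : MvPolynomial (Fin (n+1)) ℂ |
      F ∈ Submodule.span ℂ (Set.range fun i : Fin (n+1) => (X i : MvPolynomial (Fin (n+1)) ℂ) ^ (k+1)) ∧
      eval a F = 0}) :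
    (∃ α : Fin n → ℂ, (∀ i, α i ≠ 0) ∧
      J = Ideal.span (Set.range fun i : Fin n =>
        (X 0 : MvPolynomial (Fin (n+1)) ℂ) ^ (k+1) - C (α i) * (X i.succ) ^ (k+1))) ∧
    {p : Projectivization ℂ (Fin (n+1) → ℂ) |
        ∀ F ∈ J, eval (Projectivization.rep p) F = 0}.ncard = (k+1) ^ n ∧
    Projectivization.mk ℂ a (by intro h; exact ha 0 (congrFun h 0)) ∈
      {p : Projectivization ℂ (Fin (n+1) → ℂ) |
        ∀ F ∈ J, eval (Projectivization.rep p) F = 0} := by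
  have hapow : ∀ i : Fin (n+1), a i ^ (k+1) ≠ 0 := fun i => pow_ne_zero _ (ha i)
  set α : Fin n → ℂ := fun i => a 0 ^ (k+1) / a i.succ ^ (k+1) with hα
  have hα0 : ∀ i, α i ≠ 0 := fun i => div_ne_zero (hapow 0) (hapow i.succ)
  set F : Fin n → MvPolynomial (Fin (n+1)) ℂ :=
    fun i => X 0 ^ (k+1) - C (α i) * X i.succ ^ (k+1) with hFdef
  have hevF : ∀ (x : Fin (n+1) → ℂ) (i : Fin n),
      eval x (F i) = x 0 ^ (k+1) - α i * x i.succ ^ (k+1) := by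
    intro x i; simp [hFdef]
  have hFa : ∀ (i : Fin n), eval a (F i) = 0 := by
    intro i
    rw [hevF]
    show a 0 ^ (k+1) - a 0 ^ (k+1) / a i.succ ^ (k+1) * a i.succ ^ (k+1) = 0
    rw [div_mul_cancel₀ _ (hapow i.succ), sub_self]
  -- The span equality
  have hspan : J = Ideal.span (Set.range F) := by
    rw [hJ]
    apply le_antisymm
    · rw [Ideal.span_le]
      rintro G ⟨hGmem, hGeval⟩
      obtain ⟨c, hc⟩ := (Submodule.mem_span_range_iff_exists_fun ℂ).mp hGmem
      -- eval relation
      have heval : ∑ j, c j * a j ^ (k+1) = 0 := by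
        have := congrArg (eval a) hc
        simpa [smul_eq_C_mul] using this.trans hGeval
      have hc0 : c 0 = ∑ i : Fin n, (-(c i.succ) / α i) := by
        have h0 : c 0 * a 0 ^ (k+1) + ∑ i : Fin n, c i.succ * a i.succ ^ (k+1) = 0 := by
          rw [← Fin.sum_univ_succ (fun j => c j * a j ^ (k+1))]; exact heval
        rw [Finset.sum_congr rfl (fun i _ => show -(c i.succ) / α i
            = -(c i.succ * a i.succ ^ (k+1)) / a 0 ^ (k+1) by
          show -(c i.succ) / (a 0 ^ (k+1) / a i.succ ^ (k+1)) = _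
          field_simp)]
        rw [← Finset.sum_div, eq_div_iff (hapow 0), Finset.sum_neg_distrib]
        linear_combination h0
      have hkey : G = ∑ i : Fin n, C (-(c i.succ) / α i) * F i := by
        rw [← hc, Fin.sum_univ_succ (fun j => c j • (X j : MvPolynomial (Fin (n+1)) ℂ) ^ (k+1))]
        have : ∀ i : Fin n, C (-(c i.succ) / α i) * F i
            = (-(c i.succ) / α i) • (X 0 : MvPolynomial (Fin (n+1)) ℂ) ^ (k+1)
              + c i.succ • (X i.succ : MvPolynomial (Fin (n+1)) ℂ) ^ (k+1) := by
          intro i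
          rw [hFdef]
          simp only [smul_eq_C_mul, mul_sub]
          rw [← mul_assoc, ← map_mul]
          rw [show -(c i.succ) / α i * α i = -(c i.succ) from div_mul_cancel₀ _ (hα0 i)]
          push_cast [map_neg]
          ring
        rw [Finset.sum_congr rfl (fun i _ => this i), Finset.sum_add_distrib, ← Finset.sum_smul,
          ← hc0]
      rw [hkey]
      exact Ideal.sum_mem _ (fun i _ =>
        Ideal.mul_mem_left _ _ (Ideal.subset_span ⟨i, rfl⟩))
    · rw [Ideal.span_le]
      rintro G ⟨i, rfl⟩
      apply Ideal.subset_span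
      constructor
      · have h1 : (X 0 : MvPolynomial (Fin (n+1)) ℂ) ^ (k+1) ∈
            Submodule.span ℂ (Set.range fun i : Fin (n+1) => (X i : MvPolynomial (Fin (n+1)) ℂ) ^ (k+1)) :=
          Submodule.subset_span ⟨0, rfl⟩
        have h2 : (X i.succ : MvPolynomial (Fin (n+1)) ℂ) ^ (k+1) ∈
            Submodule.span ℂ (Set.range fun i : Fin (n+1) => (X i : MvPolynomial (Fin (n+1)) ℂ) ^ (k+1)) :=
          Submodule.subset_span ⟨i.succ, rfl⟩
        have : C (α i) * (X i.succ : MvPolynomial (Fin (n+1)) ℂ) ^ (k+1)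
            = (α i) • (X i.succ : MvPolynomial (Fin (n+1)) ℂ) ^ (k+1) := (smul_eq_C_mul _ _).symm
        rw [hFdef]
        exact Submodule.sub_mem _ h1 (this ▸ Submodule.smul_mem _ _ h2)
      · exact hFa i
  -- vanishing on J iff vanishing on generators
  have hvanish : ∀ (x : Fin (n+1) → ℂ), (∀ i, eval x (F i) = 0) → ∀ G ∈ J, eval x G = 0 := by
    intro x hx G hG
    rw [hspan] at hG
    refine Submodule.span_induction ?_ ?_ ?_ ?_ hG
    · rintro G ⟨i, rfl⟩; exact hx i
    · simp
    · intro p q _ _ hp hq; simp [hp, hq]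
    · intro r p _ hp; simp [smul_eq_mul, hp]
  -- scaled eval
  have hscale : ∀ (u : ℂ) (v : Fin (n+1) → ℂ) (i : Fin n),
      eval (u • v) (F i) = u ^ (k+1) * eval v (F i) := by
    intro u v i
    rw [hevF, hevF]
    simp only [Pi.smul_apply, smul_eq_mul]
    ring
  -- membership of mk v in the zero set from eval v
  have hmemZ : ∀ (v : Fin (n+1) → ℂ) (hv : v ≠ 0), (∀ i, eval v (F i) = 0) →
      ∀ G ∈ J, eval (Projectivization.rep (Projectivization.mk ℂ v hv)) G = 0 := by
    intro v hv hev
    apply hvanish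
    intro i
    obtain ⟨u, hu⟩ := (Projectivization.mk_eq_mk_iff ℂ _ _ (Projectivization.rep_nonzero _) hv).mp
      (Projectivization.mk_rep _)
    rw [← hu, Units.smul_def, hscale, hev i, mul_zero]
  refine ⟨⟨α, hα0, hspan⟩, ?_, hmemZ a _ hFa⟩
  -- counting
  set Z : Set (Projectivization ℂ (Fin (n+1) → ℂ)) :=
    {p | ∀ G ∈ J, eval (Projectivization.rep p) G = 0} with hZ
  have hmemiff : ∀ p : Projectivization ℂ (Fin (n+1) → ℂ),
      p ∈ Z ↔ ∀ i, (Projectivization.rep p 0) ^ (k+1)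
        = α i * (Projectivization.rep p i.succ) ^ (k+1) := by
    intro p
    constructor
    · intro hp i
      have := hp (F i) (by rw [hspan]; exact Ideal.subset_span ⟨i, rfl⟩)
      rw [hevF] at this
      exact sub_eq_zero.mp this
    · intro h
      exact hvanish _ (fun i => by rw [hevF, h i, sub_self])
  have hx0 : ∀ p ∈ Z, Projectivization.rep p 0 ≠ 0 := by
    intro p hp h0
    apply Projectivization.rep_nonzero p
    funext j
    refine Fin.cases ?_ ?_ j
    · exact h0
    · intro i
      have := (hmemiff p).mp hp i
      rw [h0, zero_pow (Nat.succ_ne_zero k)] at this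
      have h2 : (Projectivization.rep p i.succ) ^ (k+1) = 0 :=
        by rcases mul_eq_zero.mp this.symm with h | h
           · exact absurd h (hα0 i)
           · exact h
      exact pow_eq_zero_iff (Nat.succ_ne_zero k) |>.mp h2
  have hxs : ∀ p ∈ Z, ∀ i : Fin n, Projectivization.rep p i.succ ≠ 0 := by
    intro p hp i h
    apply hx0 p hp
    have := (hmemiff p).mp hp i
    rw [h, zero_pow (Nat.succ_ne_zero k), mul_zero] at this
    exact pow_eq_zero_iff (Nat.succ_ne_zero k) |>.mp this
  have hcons : ∀ w : Fin n → ℂ, (Fin.cons 1 w : Fin (n+1) → ℂ) ≠ 0 := by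
    intro w h
    have := congrFun h 0
    rw [Fin.cons_zero] at this
    exact one_ne_zero this
  have e : Z ≃ (∀ i : Fin n, {z : ℂ // z ^ (k+1) = (α i)⁻¹}) := by
    refine
      { toFun := fun p => fun i => ⟨Projectivization.rep p.1 i.succ / Projectivization.rep p.1 0, ?_⟩
        invFun := fun z => ⟨Projectivization.mk ℂ (Fin.cons 1 fun i => (z i).1)
          (hcons _), ?_⟩
        left_inv := ?_
        right_inv := ?_ }
    · rw [div_pow, (hmemiff p.1).mp p.2 i, mul_comm (α i),
        div_mul_cancel_left₀ (pow_ne_zero _ (hxs p.1 p.2 i))]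
    · apply hmemZ
      intro i
      rw [hevF]
      simp only [Fin.cons_zero, Fin.cons_succ, one_pow, (z i).2,
        mul_inv_cancel₀ (hα0 i), sub_self]
    · rintro ⟨p, hp⟩
      apply Subtype.ext
      show Projectivization.mk ℂ _ _ = p
      conv_rhs => rw [← Projectivization.mk_rep p]
      rw [Projectivization.mk_eq_mk_iff]
      refine ⟨Units.mk0 (Projectivization.rep p 0)⁻¹ (inv_ne_zero (hx0 p hp)), ?_⟩
      funext j
      refine Fin.cases ?_ ?_ j
      · show (Projectivization.rep p 0)⁻¹ * Projectivization.rep p 0 = _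
        rw [inv_mul_cancel₀ (hx0 p hp), Fin.cons_zero]
      · intro i
        show (Projectivization.rep p 0)⁻¹ * Projectivization.rep p i.succ = _
        rw [Fin.cons_succ]
        exact (div_eq_inv_mul _ _).symm
    · intro z
      have hv := hcons (fun i => (z i).1)
      obtain ⟨u, hu⟩ := (Projectivization.mk_eq_mk_iff ℂ _ _
        (Projectivization.rep_nonzero _) hv).mp
        (Projectivization.mk_rep (Projectivization.mk ℂ _ hv))
      funext i
      apply Subtype.ext
      show (Projectivization.mk ℂ _ hv).rep i.succ / (Projectivization.mk ℂ _ hv).rep 0 = (z i).1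
      rw [← hu, Units.smul_def]
      simp only [Pi.smul_apply, smul_eq_mul, Fin.cons_succ, Fin.cons_zero, mul_one]
      exact mul_div_cancel_left₀ _ u.ne_zero
  have hZcard : Z.ncard = Nat.card Z := rfl
  rw [hZcard, Nat.card_congr e, Nat.card_pi]
  rw [Finset.prod_congr rfl (fun i _ => aux_card_pow (k+1) (Nat.succ_ne_zero k)
    ((α i)⁻¹) (inv_ne_zero (hα0 i)))]
  rw [Finset.prod_const, Finset.card_univ, Fintype.card_fin]
end

section
/- Let f = xyz + λℓ³ with ℓ = ax + by + cz, λ ≠ 0, and abc = 0 (at least one coefficient zero). Then the Waring rank of f over ℂ equals 4. -/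
open MvPolynomial

namespace Stmt12

lemma linForm_expand (v : Fin 3 → ℂ) :
    linForm v = C (v 0) * X 0 + C (v 1) * X 1 + C (v 2) * X 2 := by
  simp [linForm, Fin.sum_univ_three]

lemma eval_linForm (v p : Fin 3 → ℂ) :
    eval p (linForm v) = v 0 * p 0 + v 1 * p 1 + v 2 * p 2 := by
  simp [linForm, Fin.sum_univ_three]

lemma pderiv_linForm (v : Fin 3 → ℂ) (j : Fin 3) :
    pderiv j (linForm v) = C (v j) := by
  rw [linForm, map_sum]
  simp [pderiv_X, Pi.single_apply, mul_ite]

lemma pderiv_linForm_pow (v : Fin 3 → ℂ) (j : Fin 3) :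
    pderiv j ((linForm v) ^ 3) = C (3 * v j) * (linForm v) ^ 2 := by
  rw [pderiv_pow, pderiv_linForm, C_mul, map_ofNat]
  norm_num
  ring

lemma pderiv2_linForm_pow (v : Fin 3 → ℂ) (k : Fin 3) :
    pderiv k (pderiv k ((linForm v) ^ 3)) = C (6 * v k ^ 2) * linForm v := by
  rw [pderiv_linForm_pow, pderiv_C_mul, pderiv_pow, pderiv_linForm]
  have h6 : (C (6 * v k ^ 2) : MvPolynomial (Fin 3) ℂ) = C (3 * v k) * C 2 * C (v k) := by
    rw [← C_mul, ← C_mul]; congr 1; ring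
  rw [h6, show ((2:ℕ) : MvPolynomial (Fin 3) ℂ) = C 2 from by simp only [Nat.cast_ofNat, map_ofNat]]
  ring

lemma key_sum (A : Fin 3 → Fin 3 → ℂ) (c u : Fin 3 → ℂ) :
    (∑ j : Fin 3, C (u j) * pderiv j (∑ i : Fin 3, c i • (linForm (A i)) ^ 3))
      = ∑ i : Fin 3, C (3 * c i * (u 0 * A i 0 + u 1 * A i 1 + u 2 * A i 2))
          * (linForm (A i)) ^ 2 := by
  simp only [smul_eq_C_mul, map_sum, pderiv_C_mul, pderiv_linForm_pow, Finset.mul_sum]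
  rw [Finset.sum_comm]
  refine Finset.sum_congr rfl fun i _ => ?_
  simp only [Fin.sum_univ_three, smul_eq_C_mul, C_mul, C_add]
  ring

lemma key_sum2 (A : Fin 3 → Fin 3 → ℂ) (c : Fin 3 → ℂ) (k : Fin 3) :
    pderiv k (pderiv k (∑ i : Fin 3, c i • (linForm (A i)) ^ 3))
      = ∑ i : Fin 3, C (6 * c i * A i k ^ 2) * linForm (A i) := by
  simp only [smul_eq_C_mul, map_sum, pderiv_C_mul, pderiv2_linForm_pow]
  refine Finset.sum_congr rfl fun i _ => ?_
  simp only [C_mul]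
  ring

lemma dot_single (w : Fin 3 → ℂ) (j : Fin 3) :
    w 0 * (Pi.single (M := fun _ : Fin 3 => ℂ) j 1) 0 + w 1 * (Pi.single (M := fun _ : Fin 3 => ℂ) j 1) 1 + w 2 * (Pi.single (M := fun _ : Fin 3 => ℂ) j 1) 2 = w j := by
  fin_cases j <;> simp

lemma lower_core (f : MvPolynomial (Fin 3) ℂ) (k : Fin 3)
    (h2 : pderiv k (pderiv k f) = 0)
    (hind : ∀ u : Fin 3 → ℂ, (∑ j : Fin 3, C (u j) * pderiv j f) = 0 → u = 0)
    (A : Fin 3 → Fin 3 → ℂ) (c : Fin 3 → ℂ) :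
    f ≠ ∑ i : Fin 3, c i • (linForm (A i)) ^ 3 := by
  intro hf
  set B : Fin 3 → Fin 3 → ℂ := fun i => if c i = 0 then 0 else A i with hB
  have hfB : f = ∑ i : Fin 3, c i • (linForm (B i)) ^ 3 := by
    rw [hf]
    refine Finset.sum_congr rfl fun i _ => ?_
    by_cases hci : c i = 0
    · simp [hci]
    · simp [hB, hci]
  set M : Matrix (Fin 3) (Fin 3) ℂ := Matrix.of B with hM
  by_cases hdet : M.det = 0
  · obtain ⟨u, hu0, huM⟩ := Matrix.exists_mulVec_eq_zero_iff.mpr hdet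
    refine hu0 (hind u ?_)
    rw [hfB, key_sum]
    refine Finset.sum_eq_zero fun i _ => ?_
    have hz : u 0 * B i 0 + u 1 * B i 1 + u 2 * B i 2 = 0 := by
      have h := congrFun huM i
      simp only [Matrix.mulVec, dotProduct, Fin.sum_univ_three, hM, Matrix.of_apply,
        Pi.zero_apply] at h
      linear_combination h
    rw [hz]
    simp
  · have hrel : ∑ i : Fin 3, C (6 * c i * B i k ^ 2) * linForm (B i) = 0 := by
      rw [← key_sum2 B c k, ← hfB, h2]
    have hd : ∀ j : Fin 3, ∑ i : Fin 3, (6 * c i * B i k ^ 2) * B i j = 0 := by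
      intro j
      have h := congrArg (eval ((Pi.single (M := fun _ : Fin 3 => ℂ) j 1))) hrel
      simp only [map_sum, eval_mul, eval_C, eval_linForm, map_zero] at h
      have hds : ∀ i : Fin 3, B i 0 * (Pi.single (M := fun _ : Fin 3 => ℂ) j 1) 0 + B i 1 * (Pi.single (M := fun _ : Fin 3 => ℂ) j 1) 1
          + B i 2 * (Pi.single (M := fun _ : Fin 3 => ℂ) j 1) 2 = B i j := fun i => dot_single (B i) j
      simp only [hds] at h
      exact h
    have hd0 : ∀ i, 6 * c i * B i k ^ 2 = 0 := by
      by_contra hcon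
      push_neg at hcon
      obtain ⟨i0, hi0⟩ := hcon
      apply hdet
      rw [← Matrix.exists_vecMul_eq_zero_iff]
      refine ⟨fun i => 6 * c i * B i k ^ 2, fun h0 => hi0 (congrFun h0 i0), ?_⟩
      funext j
      have := hd j
      simp only [Matrix.vecMul, dotProduct, Fin.sum_univ_three, hM, Matrix.of_apply,
        Pi.zero_apply]
      simp only [Fin.sum_univ_three] at this
      linear_combination this
    have hcol : ∀ i, M i k = 0 := by
      intro i
      rcases mul_eq_zero.mp (hd0 i) with h6c | hBk
      · rcases mul_eq_zero.mp h6c with h6 | hc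
        · norm_num at h6
        · show B i k = 0
          simp [hB, hc]
      · show B i k = 0
        exact pow_eq_zero_iff (two_ne_zero) |>.mp hBk
    exact hdet (Matrix.det_eq_zero_of_column_eq_zero k hcol)

lemma rank_eq_four (f : MvPolynomial (Fin 3) ℂ) (k : Fin 3)
    (h2 : pderiv k (pderiv k f) = 0)
    (hind : ∀ u : Fin 3 → ℂ, (∑ j : Fin 3, C (u j) * pderiv j f) = 0 → u = 0)
    (hup : ∃ (A : Fin 4 → Fin 3 → ℂ) (c : Fin 4 → ℂ),
      f = ∑ i, c i • (linForm (A i)) ^ 3) :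
    waringRank 3 f = 4 := by
  have pad : ∀ r : ℕ,
      (∃ (A : Fin r → Fin 3 → ℂ) (c : Fin r → ℂ), f = ∑ i, c i • (linForm (A i)) ^ 3) →
      (∃ (A : Fin (r+1) → Fin 3 → ℂ) (c : Fin (r+1) → ℂ),
        f = ∑ i, c i • (linForm (A i)) ^ 3) := by
    rintro r ⟨A, c, h⟩
    refine ⟨Fin.snoc A 0, Fin.snoc c 0, ?_⟩
    rw [h, Fin.sum_univ_castSucc]
    simp
  have hnot : ∀ r : ℕ, r ≤ 3 →
      ¬ (∃ (A : Fin r → Fin 3 → ℂ) (c : Fin r → ℂ), f = ∑ i, c i • (linForm (A i)) ^ 3) := by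
    intro r hr hex
    have h3 : ∃ (A : Fin 3 → Fin 3 → ℂ) (c : Fin 3 → ℂ),
        f = ∑ i, c i • (linForm (A i)) ^ 3 := by
      interval_cases r
      · exact pad 2 (pad 1 (pad 0 hex))
      · exact pad 2 (pad 1 hex)
      · exact pad 2 hex
      · exact hex
    obtain ⟨A, c, h⟩ := h3
    exact lower_core f k h2 hind A c h
  have key : ∀ r : ℕ, r ∈ {m : ℕ | ∃ (a : Fin m → Fin 3 → ℂ) (cc : Fin m → ℂ),
      f = ∑ i, cc i • (linForm (a i)) ^ 3} ↔
      (∃ (A : Fin r → Fin 3 → ℂ) (c : Fin r → ℂ), f = ∑ i, c i • (linForm (A i)) ^ 3) := by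
    intro r; rfl
  unfold waringRank
  have h4S : (4:ℕ) ∈ {m : ℕ | ∃ (a : Fin m → Fin 3 → ℂ) (cc : Fin m → ℂ),
      f = ∑ i, cc i • (linForm (a i)) ^ 3} := (key 4).mpr hup
  have hne : Set.Nonempty {m : ℕ | ∃ (a : Fin m → Fin 3 → ℂ) (cc : Fin m → ℂ),
      f = ∑ i, cc i • (linForm (a i)) ^ 3} := ⟨4, h4S⟩
  have hmem := Nat.sInf_mem hne
  have hle := Nat.sInf_le h4S
  set n := sInf {m : ℕ | ∃ (a : Fin m → Fin 3 → ℂ) (cc : Fin m → ℂ),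
      f = ∑ i, cc i • (linForm (a i)) ^ 3} with hn
  clear_value n
  have hmem' := (key n).mp hmem
  clear hn hmem hne key h4S pad
  rcases Nat.lt_or_ge n 4 with hlt | hge
  · exact absurd hmem' (hnot _ (by omega))
  · omega

lemma pdm0 : pderiv (0:Fin 3) (X 0 * X 1 * X 2 : MvPolynomial (Fin 3) ℂ) = X 1 * X 2 := by
  simp [pderiv_mul]
  ring

lemma pdm1 : pderiv (1:Fin 3) (X 0 * X 1 * X 2 : MvPolynomial (Fin 3) ℂ) = X 0 * X 2 := by
  simp [pderiv_mul]
  ring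

lemma pdm2 : pderiv (2:Fin 3) (X 0 * X 1 * X 2 : MvPolynomial (Fin 3) ℂ) = X 0 * X 1 := by
  simp [pderiv_mul]

lemma sqrt2_exists : ∃ r : ℂ, r ^ 2 = 2 :=
  IsAlgClosed.exists_pow_nat_eq (2:ℂ) (by norm_num)

lemma root_exists (w : ℂ) : ∃ s : ℂ, s ^ 2 = w :=
  IsAlgClosed.exists_pow_nat_eq w (by norm_num)

lemma hind_c0 (a b lam : ℂ) : ∀ u : Fin 3 → ℂ,
    (∑ j : Fin 3, C (u j) * pderiv j
      (X 0 * X 1 * X 2 + C lam * (linForm ![a,b,0]) ^ 3)) = 0 → u = 0 := by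
  intro u hu
  simp only [Fin.sum_univ_three, map_add, pderiv_C_mul, pderiv_linForm_pow] at hu
  rw [pdm0, pdm1, pdm2] at hu
  have e1 := congrArg (eval ![(0:ℂ),1,1]) hu
  have e2 := congrArg (eval ![(0:ℂ),1,-1]) hu
  have e3 := congrArg (eval ![(1:ℂ),0,1]) hu
  have e4 := congrArg (eval ![(1:ℂ),0,-1]) hu
  have e5 := congrArg (eval ![(1:ℂ),1,0]) hu
  simp only [map_add, map_mul, map_pow, eval_C, eval_X, eval_linForm, map_zero,
    Matrix.cons_val_zero, Matrix.cons_val_one, Matrix.head_cons, Matrix.cons_val_two,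
    Matrix.tail_cons] at e1 e2 e3 e4 e5
  have h0 : u 0 = 0 := by linear_combination (e1 - e2) / 2
  have h1 : u 1 = 0 := by linear_combination (e3 - e4) / 2
  have h2 : u 2 = 0 := by
    linear_combination e5 - (3*lam*a*(a+b)^2) * h0 - (3*lam*b*(a+b)^2) * h1
  funext j
  fin_cases j
  · exact h0
  · exact h1
  · exact h2

lemma rank_c0 (a b lam : ℂ) (hlam : lam ≠ 0) :
    waringRank 3 ((X 0 * X 1 * X 2 + C lam * (C a * X 0 + C b * X 1) ^ 3 :
      MvPolynomial (Fin 3) ℂ)) = 4 := by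
  have hell : (C a * X 0 + C b * X 1 : MvPolynomial (Fin 3) ℂ) = linForm ![a,b,0] := by
    rw [linForm_expand]
    simp
  rw [hell]
  refine rank_eq_four _ 2 ?_ (hind_c0 a b lam) ?_
  · rw [map_add, pderiv_C_mul, pderiv_linForm_pow, pdm2]
    have : (![a,b,0] : Fin 3 → ℂ) 2 = 0 := rfl
    rw [this]
    simp [pderiv_mul]
  · -- upper bound
    by_cases ha : a = 0 <;> by_cases hb : b = 0
    · -- xyz
      refine ⟨![![1,1,1],![1,-1,-1],![-1,1,-1],![-1,-1,1]], ![1/24,1/24,1/24,1/24], ?_⟩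
      apply MvPolynomial.funext
      intro p
      simp only [Fin.sum_univ_four, smul_eval, map_add, map_mul, map_pow, eval_C, eval_X,
        eval_linForm, ha, hb, Matrix.cons_val_zero, Matrix.cons_val_one, Matrix.head_cons,
        Matrix.cons_val_two, Matrix.tail_cons, Matrix.cons_val_three]
      ring
    · -- a = 0, b ≠ 0 : f = xyz + (lam b^3) y^3
      obtain ⟨s, hs0⟩ := root_exists (6 * (lam * b^3))⁻¹
      obtain ⟨t, ht0⟩ := root_exists (-(6 * (lam * b^3))⁻¹)
      have hmu : (6:ℂ) * (lam * b^3) ≠ 0 :=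
        mul_ne_zero (by norm_num) (mul_ne_zero hlam (pow_ne_zero 3 hb))
      have hs : 6 * (lam * b^3) * s^2 = 1 := by rw [hs0]; field_simp
      have ht : 6 * (lam * b^3) * t^2 = -1 := by rw [ht0]; field_simp
      refine ⟨![![s,1,s], ![s,-1,s], ![-t,1,t], ![-t,-1,t]],
        ![lam*b^3/4, -(lam*b^3/4), lam*b^3/4, -(lam*b^3/4)], ?_⟩
      apply MvPolynomial.funext
      intro p
      simp only [Fin.sum_univ_four, smul_eval, map_add, map_mul, map_pow, eval_C, eval_X,
        eval_linForm, ha, Matrix.cons_val_zero, Matrix.cons_val_one, Matrix.head_cons,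
        Matrix.cons_val_two, Matrix.tail_cons, Matrix.cons_val_three]
      linear_combination (-(p 1)*((p 0)+(p 2))^2/4) * hs + (-(p 1)*((p 2)-(p 0))^2/4) * ht
    · -- a ≠ 0, b = 0 : f = xyz + (lam a^3) x^3
      obtain ⟨s, hs0⟩ := root_exists (6 * (lam * a^3))⁻¹
      obtain ⟨t, ht0⟩ := root_exists (-(6 * (lam * a^3))⁻¹)
      have hmu : (6:ℂ) * (lam * a^3) ≠ 0 :=
        mul_ne_zero (by norm_num) (mul_ne_zero hlam (pow_ne_zero 3 ha))
      have hs : 6 * (lam * a^3) * s^2 = 1 := by rw [hs0]; field_simp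
      have ht : 6 * (lam * a^3) * t^2 = -1 := by rw [ht0]; field_simp
      refine ⟨![![1,s,s], ![-1,s,s], ![1,-t,t], ![-1,-t,t]],
        ![lam*a^3/4, -(lam*a^3/4), lam*a^3/4, -(lam*a^3/4)], ?_⟩
      apply MvPolynomial.funext
      intro p
      simp only [Fin.sum_univ_four, smul_eval, map_add, map_mul, map_pow, eval_C, eval_X,
        eval_linForm, hb, Matrix.cons_val_zero, Matrix.cons_val_one, Matrix.head_cons,
        Matrix.cons_val_two, Matrix.tail_cons, Matrix.cons_val_three]
      linear_combination (-(p 0)*((p 1)+(p 2))^2/4) * hs + (-(p 0)*((p 2)-(p 1))^2/4) * ht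
    · -- a ≠ 0, b ≠ 0
      obtain ⟨r, hr⟩ := sqrt2_exists
      have hA : a * a⁻¹ = 1 := mul_inv_cancel₀ ha
      have hB : b * b⁻¹ = 1 := mul_inv_cancel₀ hb
      have hL : lam * lam⁻¹ = 1 := mul_inv_cancel₀ hlam
      set ia := a⁻¹ with hia
      set ib := b⁻¹ with hib
      set ilam := lam⁻¹ with hilam
      refine ⟨![![6*lam*(1+r)*a^2*b, 6*lam*(1+r)*a*b^2, 1],
               ![6*lam*(1-r)*a^2*b, 6*lam*(1-r)*a*b^2, 1],
               ![6*lam*a^2*b, -(6*lam*a*b^2), 1],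
               ![-(6*lam*a^2*b), 6*lam*a*b^2, 1]],
        ![(1 - r/2) * ilam^2 * ia^3 * ib^3 / 864,
          (1 + r/2) * ilam^2 * ia^3 * ib^3 / 864,
          -(ilam^2 * ia^3 * ib^3 / 864),
          -(ilam^2 * ia^3 * ib^3 / 864)], ?_⟩
      apply MvPolynomial.funext
      intro p
      simp only [Fin.sum_univ_four, smul_eval, map_add, map_mul, map_pow, eval_C, eval_X,
        eval_linForm, Matrix.cons_val_zero, Matrix.cons_val_one, Matrix.head_cons,
        Matrix.cons_val_two, Matrix.tail_cons, Matrix.cons_val_three]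
      linear_combination ((1/48)*(p 1)*(p 2)^2*a*b^2*lam*ia^3*ib^3*ilam^2 + (-1/4)*(p 1)^3*a^3*b^6*lam^3*ia^3*ib^3*ilam^2 + (1/4)*(p 1)^3*a^3*b^6*lam^3*ia^3*ib^3*ilam^2*r^2 + (1/48)*(p 0)*(p 2)^2*a^2*b*lam*ia^3*ib^3*ilam^2 + (-3/4)*(p 0)*(p 1)^2*a^4*b^5*lam^3*ia^3*ib^3*ilam^2 + (3/4)*(p 0)*(p 1)^2*a^4*b^5*lam^3*ia^3*ib^3*ilam^2*r^2 + (-3/4)*(p 0)^2*(p 1)*a^5*b^4*lam^3*ia^3*ib^3*ilam^2 + (3/4)*(p 0)^2*(p 1)*a^5*b^4*lam^3*ia^3*ib^3*ilam^2*r^2 + (-1/4)*(p 0)^3*a^6*b^3*lam^3*ia^3*ib^3*ilam^2 + (1/4)*(p 0)^3*a^6*b^3*lam^3*ia^3*ib^3*ilam^2*r^2) * hr + ((-1)*(p 1)^3*b^6*lam^3*ib^3*ilam^2 + (-1)*(p 1)^3*a*b^6*lam^3*ia*ib^3*ilam^2 + (-1)*(p 1)^3*a^2*b^6*lam^3*ia^2*ib^3*ilam^2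 + (-1)*(p 0)*(p 1)*(p 2)*b^3*lam^2*ib^3*ilam^2 + (-1)*(p 0)*(p 1)*(p 2)*a*b^3*lam^2*ia*ib^3*ilam^2 + (-1)*(p 0)*(p 1)*(p 2)*a^2*b^3*lam^2*ia^2*ib^3*ilam^2 + (-3)*(p 0)*(p 1)^2*a*b^5*lam^3*ib^3*ilam^2 + (-3)*(p 0)*(p 1)^2*a^2*b^5*lam^3*ia*ib^3*ilam^2 + (-3)*(p 0)*(p 1)^2*a^3*b^5*lam^3*ia^2*ib^3*ilam^2 + (-3)*(p 0)^2*(p 1)*a^2*b^4*lam^3*ib^3*ilam^2 + (-3)*(p 0)^2*(p 1)*a^3*b^4*lam^3*ia*ib^3*ilam^2 + (-3)*(p 0)^2*(p 1)*a^4*b^4*lam^3*ia^2*ib^3*ilam^2 + (-1)*(p 0)^3*a^3*b^3*lam^3*ib^3*ilam^2 + (-1)*(p 0)^3*a^4*b^3*lam^3*ia*ib^3*ilam^2 + (-1)*(p 0)^3*a^5*b^3*lam^3*ia^2*ib^3*ilam^2) * hA + ((-1)*(p 1)^3*b^3*lam^3*ilam^2 + (-1)*(p 1)^3*b^4*lam^3*ib*ilam^2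 + (-1)*(p 1)^3*b^5*lam^3*ib^2*ilam^2 + (-1)*(p 0)*(p 1)*(p 2)*lam^2*ilam^2 + (-1)*(p 0)*(p 1)*(p 2)*b*lam^2*ib*ilam^2 + (-1)*(p 0)*(p 1)*(p 2)*b^2*lam^2*ib^2*ilam^2 + (-3)*(p 0)*(p 1)^2*a*b^2*lam^3*ilam^2 + (-3)*(p 0)*(p 1)^2*a*b^3*lam^3*ib*ilam^2 + (-3)*(p 0)*(p 1)^2*a*b^4*lam^3*ib^2*ilam^2 + (-3)*(p 0)^2*(p 1)*a^2*b*lam^3*ilam^2 + (-3)*(p 0)^2*(p 1)*a^2*b^2*lam^3*ib*ilam^2 + (-3)*(p 0)^2*(p 1)*a^2*b^3*lam^3*ib^2*ilam^2 + (-1)*(p 0)^3*a^3*lam^3*ilam^2 + (-1)*(p 0)^3*a^3*b*lam^3*ib*ilam^2 + (-1)*(p 0)^3*a^3*b^2*lam^3*ib^2*ilam^2) * hB + ((-1)*(p 1)^3*b^3*lam + (-1)*(p 1)^3*b^3*lam^2*ilam + (-1)*(p 0)*(p 1)*(p 2) + (-1)*(p 0)*(p 1)*(p 2)*lam*ilam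 + (-3)*(p 0)*(p 1)^2*a*b^2*lam + (-3)*(p 0)*(p 1)^2*a*b^2*lam^2*ilam + (-3)*(p 0)^2*(p 1)*a^2*b*lam + (-3)*(p 0)^2*(p 1)*a^2*b*lam^2*ilam + (-1)*(p 0)^3*a^3*lam + (-1)*(p 0)^3*a^3*lam^2*ilam) * hL

lemma hind_b0 (a c lam : ℂ) : ∀ u : Fin 3 → ℂ,
    (∑ j : Fin 3, C (u j) * pderiv j
      (X 0 * X 1 * X 2 + C lam * (linForm ![a,0,c]) ^ 3)) = 0 → u = 0 := by
  intro u hu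
  simp only [Fin.sum_univ_three, map_add, pderiv_C_mul, pderiv_linForm_pow] at hu
  rw [pdm0, pdm1, pdm2] at hu
  have e1 := congrArg (eval ![(0:ℂ),1,1]) hu
  have e2 := congrArg (eval ![(0:ℂ),1,-1]) hu
  have e3 := congrArg (eval ![(1:ℂ),1,0]) hu
  have e4 := congrArg (eval ![(1:ℂ),-1,0]) hu
  have e5 := congrArg (eval ![(1:ℂ),0,1]) hu
  simp only [map_add, map_mul, map_pow, eval_C, eval_X, eval_linForm, map_zero,
    Matrix.cons_val_zero, Matrix.cons_val_one, Matrix.head_cons, Matrix.cons_val_two,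
    Matrix.tail_cons] at e1 e2 e3 e4 e5
  have h0 : u 0 = 0 := by linear_combination (e1 - e2) / 2
  have h2 : u 2 = 0 := by linear_combination (e3 - e4) / 2
  have h1 : u 1 = 0 := by
    linear_combination e5 - (3*lam*a*(a+c)^2) * h0 - (3*lam*c*(a+c)^2) * h2
  funext j
  fin_cases j
  · exact h0
  · exact h1
  · exact h2

lemma rank_b0 (a c lam : ℂ) (hlam : lam ≠ 0) :
    waringRank 3 ((X 0 * X 1 * X 2 + C lam * (C a * X 0 + C c * X 2) ^ 3 :
      MvPolynomial (Fin 3) ℂ)) = 4 := by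
  have hell : (C a * X 0 + C c * X 2 : MvPolynomial (Fin 3) ℂ) = linForm ![a,0,c] := by
    rw [linForm_expand]
    simp
  rw [hell]
  refine rank_eq_four _ 1 ?_ (hind_b0 a c lam) ?_
  · rw [map_add, pderiv_C_mul, pderiv_linForm_pow, pdm1]
    have : (![a,0,c] : Fin 3 → ℂ) 1 = 0 := rfl
    rw [this]
    simp [pderiv_mul]
  · by_cases ha : a = 0 <;> by_cases hc : c = 0
    · refine ⟨![![1,1,1],![1,-1,-1],![-1,1,-1],![-1,-1,1]], ![1/24,1/24,1/24,1/24], ?_⟩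
      apply MvPolynomial.funext
      intro p
      simp only [Fin.sum_univ_four, smul_eval, map_add, map_mul, map_pow, eval_C, eval_X,
        eval_linForm, ha, hc, Matrix.cons_val_zero, Matrix.cons_val_one, Matrix.head_cons,
        Matrix.cons_val_two, Matrix.tail_cons, Matrix.cons_val_three]
      ring
    · -- a = 0, c ≠ 0 : f = xyz + (lam c^3) z^3
      obtain ⟨s, hs0⟩ := root_exists (6 * (lam * c^3))⁻¹
      obtain ⟨t, ht0⟩ := root_exists (-(6 * (lam * c^3))⁻¹)
      have hmu : (6:ℂ) * (lam * c^3) ≠ 0 :=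
        mul_ne_zero (by norm_num) (mul_ne_zero hlam (pow_ne_zero 3 hc))
      have hs : 6 * (lam * c^3) * s^2 = 1 := by rw [hs0]; field_simp
      have ht : 6 * (lam * c^3) * t^2 = -1 := by rw [ht0]; field_simp
      refine ⟨![![s,s,1], ![s,s,-1], ![-t,t,1], ![-t,t,-1]],
        ![lam*c^3/4, -(lam*c^3/4), lam*c^3/4, -(lam*c^3/4)], ?_⟩
      apply MvPolynomial.funext
      intro p
      simp only [Fin.sum_univ_four, smul_eval, map_add, map_mul, map_pow, eval_C, eval_X,
        eval_linForm, ha, Matrix.cons_val_zero, Matrix.cons_val_one, Matrix.head_cons,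
        Matrix.cons_val_two, Matrix.tail_cons, Matrix.cons_val_three]
      linear_combination (-(p 2)*((p 0)+(p 1))^2/4) * hs + (-(p 2)*((p 1)-(p 0))^2/4) * ht
    · -- a ≠ 0, c = 0 : f = xyz + (lam a^3) x^3
      obtain ⟨s, hs0⟩ := root_exists (6 * (lam * a^3))⁻¹
      obtain ⟨t, ht0⟩ := root_exists (-(6 * (lam * a^3))⁻¹)
      have hmu : (6:ℂ) * (lam * a^3) ≠ 0 :=
        mul_ne_zero (by norm_num) (mul_ne_zero hlam (pow_ne_zero 3 ha))
      have hs : 6 * (lam * a^3) * s^2 = 1 := by rw [hs0]; field_simp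
      have ht : 6 * (lam * a^3) * t^2 = -1 := by rw [ht0]; field_simp
      refine ⟨![![1,s,s], ![-1,s,s], ![1,-t,t], ![-1,-t,t]],
        ![lam*a^3/4, -(lam*a^3/4), lam*a^3/4, -(lam*a^3/4)], ?_⟩
      apply MvPolynomial.funext
      intro p
      simp only [Fin.sum_univ_four, smul_eval, map_add, map_mul, map_pow, eval_C, eval_X,
        eval_linForm, hc, Matrix.cons_val_zero, Matrix.cons_val_one, Matrix.head_cons,
        Matrix.cons_val_two, Matrix.tail_cons, Matrix.cons_val_three]
      linear_combination (-(p 0)*((p 1)+(p 2))^2/4) * hs + (-(p 0)*((p 2)-(p 1))^2/4) * ht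
    · obtain ⟨r, hr⟩ := sqrt2_exists
      have hA : a * a⁻¹ = 1 := mul_inv_cancel₀ ha
      have hB : c * c⁻¹ = 1 := mul_inv_cancel₀ hc
      have hL : lam * lam⁻¹ = 1 := mul_inv_cancel₀ hlam
      set ia := a⁻¹ with hia
      set ic := c⁻¹ with hic
      set ilam := lam⁻¹ with hilam
      refine ⟨![![6*lam*(1+r)*a^2*c, 1, 6*lam*(1+r)*a*c^2],
               ![6*lam*(1-r)*a^2*c, 1, 6*lam*(1-r)*a*c^2],
               ![6*lam*a^2*c, 1, -(6*lam*a*c^2)],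
               ![-(6*lam*a^2*c), 1, 6*lam*a*c^2]],
        ![(1 - r/2) * ilam^2 * ia^3 * ic^3 / 864,
          (1 + r/2) * ilam^2 * ia^3 * ic^3 / 864,
          -(ilam^2 * ia^3 * ic^3 / 864),
          -(ilam^2 * ia^3 * ic^3 / 864)], ?_⟩
      apply MvPolynomial.funext
      intro p
      simp only [Fin.sum_univ_four, smul_eval, map_add, map_mul, map_pow, eval_C, eval_X,
        eval_linForm, Matrix.cons_val_zero, Matrix.cons_val_one, Matrix.head_cons,
        Matrix.cons_val_two, Matrix.tail_cons, Matrix.cons_val_three]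
      linear_combination ((-1/4)*(p 2)^3*a^3*c^6*lam^3*ia^3*ic^3*ilam^2 + (1/4)*(p 2)^3*a^3*c^6*lam^3*ia^3*ic^3*ilam^2*r^2 + (1/48)*(p 1)^2*(p 2)*a*c^2*lam*ia^3*ic^3*ilam^2 + (-3/4)*(p 0)*(p 2)^2*a^4*c^5*lam^3*ia^3*ic^3*ilam^2 + (3/4)*(p 0)*(p 2)^2*a^4*c^5*lam^3*ia^3*ic^3*ilam^2*r^2 + (1/48)*(p 0)*(p 1)^2*a^2*c*lam*ia^3*ic^3*ilam^2 + (-3/4)*(p 0)^2*(p 2)*a^5*c^4*lam^3*ia^3*ic^3*ilam^2 + (3/4)*(p 0)^2*(p 2)*a^5*c^4*lam^3*ia^3*ic^3*ilam^2*r^2 + (-1/4)*(p 0)^3*a^6*c^3*lam^3*ia^3*ic^3*ilam^2 + (1/4)*(p 0)^3*a^6*c^3*lam^3*ia^3*ic^3*ilam^2*r^2) * hr + ((-1)*(p 2)^3*c^6*lam^3*ic^3*ilam^2 + (-1)*(p 2)^3*a*c^6*lam^3*ia*ic^3*ilam^2 + (-1)*(p 2)^3*a^2*c^6*lam^3*ia^2*ic^3*ilam^2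 + (-3)*(p 0)*(p 2)^2*a*c^5*lam^3*ic^3*ilam^2 + (-3)*(p 0)*(p 2)^2*a^2*c^5*lam^3*ia*ic^3*ilam^2 + (-3)*(p 0)*(p 2)^2*a^3*c^5*lam^3*ia^2*ic^3*ilam^2 + (-1)*(p 0)*(p 1)*(p 2)*c^3*lam^2*ic^3*ilam^2 + (-1)*(p 0)*(p 1)*(p 2)*a*c^3*lam^2*ia*ic^3*ilam^2 + (-1)*(p 0)*(p 1)*(p 2)*a^2*c^3*lam^2*ia^2*ic^3*ilam^2 + (-3)*(p 0)^2*(p 2)*a^2*c^4*lam^3*ic^3*ilam^2 + (-3)*(p 0)^2*(p 2)*a^3*c^4*lam^3*ia*ic^3*ilam^2 + (-3)*(p 0)^2*(p 2)*a^4*c^4*lam^3*ia^2*ic^3*ilam^2 + (-1)*(p 0)^3*a^3*c^3*lam^3*ic^3*ilam^2 + (-1)*(p 0)^3*a^4*c^3*lam^3*ia*ic^3*ilam^2 + (-1)*(p 0)^3*a^5*c^3*lam^3*ia^2*ic^3*ilam^2) * hA + ((-1)*(p 2)^3*c^3*lam^3*ilam^2 + (-1)*(p 2)^3*c^4*lam^3*ic*ilam^2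 + (-1)*(p 2)^3*c^5*lam^3*ic^2*ilam^2 + (-3)*(p 0)*(p 2)^2*a*c^2*lam^3*ilam^2 + (-3)*(p 0)*(p 2)^2*a*c^3*lam^3*ic*ilam^2 + (-3)*(p 0)*(p 2)^2*a*c^4*lam^3*ic^2*ilam^2 + (-1)*(p 0)*(p 1)*(p 2)*lam^2*ilam^2 + (-1)*(p 0)*(p 1)*(p 2)*c*lam^2*ic*ilam^2 + (-1)*(p 0)*(p 1)*(p 2)*c^2*lam^2*ic^2*ilam^2 + (-3)*(p 0)^2*(p 2)*a^2*c*lam^3*ilam^2 + (-3)*(p 0)^2*(p 2)*a^2*c^2*lam^3*ic*ilam^2 + (-3)*(p 0)^2*(p 2)*a^2*c^3*lam^3*ic^2*ilam^2 + (-1)*(p 0)^3*a^3*lam^3*ilam^2 + (-1)*(p 0)^3*a^3*c*lam^3*ic*ilam^2 + (-1)*(p 0)^3*a^3*c^2*lam^3*ic^2*ilam^2) * hB + ((-1)*(p 2)^3*c^3*lam + (-1)*(p 2)^3*c^3*lam^2*ilam + (-3)*(p 0)*(p 2)^2*a*c^2*lam + (-3)*(p 0)*(p 2)^2*a*c^2*lam^2*ilam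 + (-1)*(p 0)*(p 1)*(p 2) + (-1)*(p 0)*(p 1)*(p 2)*lam*ilam + (-3)*(p 0)^2*(p 2)*a^2*c*lam + (-3)*(p 0)^2*(p 2)*a^2*c*lam^2*ilam + (-1)*(p 0)^3*a^3*lam + (-1)*(p 0)^3*a^3*lam^2*ilam) * hL

lemma hind_a0 (b c lam : ℂ) : ∀ u : Fin 3 → ℂ,
    (∑ j : Fin 3, C (u j) * pderiv j
      (X 0 * X 1 * X 2 + C lam * (linForm ![0,b,c]) ^ 3)) = 0 → u = 0 := by
  intro u hu
  simp only [Fin.sum_univ_three, map_add, pderiv_C_mul, pderiv_linForm_pow] at hu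
  rw [pdm0, pdm1, pdm2] at hu
  have e1 := congrArg (eval ![(1:ℂ),0,1]) hu
  have e2 := congrArg (eval ![(1:ℂ),0,-1]) hu
  have e3 := congrArg (eval ![(1:ℂ),1,0]) hu
  have e4 := congrArg (eval ![(1:ℂ),-1,0]) hu
  have e5 := congrArg (eval ![(0:ℂ),1,1]) hu
  simp only [map_add, map_mul, map_pow, eval_C, eval_X, eval_linForm, map_zero,
    Matrix.cons_val_zero, Matrix.cons_val_one, Matrix.head_cons, Matrix.cons_val_two,
    Matrix.tail_cons] at e1 e2 e3 e4 e5
  have h1 : u 1 = 0 := by linear_combination (e1 - e2) / 2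
  have h2 : u 2 = 0 := by linear_combination (e3 - e4) / 2
  have h0 : u 0 = 0 := by
    linear_combination e5 - (3*lam*b*(b+c)^2) * h1 - (3*lam*c*(b+c)^2) * h2
  funext j
  fin_cases j
  · exact h0
  · exact h1
  · exact h2

lemma rank_a0 (b c lam : ℂ) (hlam : lam ≠ 0) :
    waringRank 3 ((X 0 * X 1 * X 2 + C lam * (C b * X 1 + C c * X 2) ^ 3 :
      MvPolynomial (Fin 3) ℂ)) = 4 := by
  have hell : (C b * X 1 + C c * X 2 : MvPolynomial (Fin 3) ℂ) = linForm ![0,b,c] := by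
    rw [linForm_expand]
    simp
  rw [hell]
  refine rank_eq_four _ 0 ?_ (hind_a0 b c lam) ?_
  · rw [map_add, pderiv_C_mul, pderiv_linForm_pow, pdm0]
    have : (![0,b,c] : Fin 3 → ℂ) 0 = 0 := rfl
    rw [this]
    simp [pderiv_mul]
  · by_cases hb : b = 0 <;> by_cases hc : c = 0
    · refine ⟨![![1,1,1],![1,-1,-1],![-1,1,-1],![-1,-1,1]], ![1/24,1/24,1/24,1/24], ?_⟩
      apply MvPolynomial.funext
      intro p
      simp only [Fin.sum_univ_four, smul_eval, map_add, map_mul, map_pow, eval_C, eval_X,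
        eval_linForm, hb, hc, Matrix.cons_val_zero, Matrix.cons_val_one, Matrix.head_cons,
        Matrix.cons_val_two, Matrix.tail_cons, Matrix.cons_val_three]
      ring
    · -- b = 0, c ≠ 0 : f = xyz + (lam c^3) z^3
      obtain ⟨s, hs0⟩ := root_exists (6 * (lam * c^3))⁻¹
      obtain ⟨t, ht0⟩ := root_exists (-(6 * (lam * c^3))⁻¹)
      have hmu : (6:ℂ) * (lam * c^3) ≠ 0 :=
        mul_ne_zero (by norm_num) (mul_ne_zero hlam (pow_ne_zero 3 hc))
      have hs : 6 * (lam * c^3) * s^2 = 1 := by rw [hs0]; field_simp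
      have ht : 6 * (lam * c^3) * t^2 = -1 := by rw [ht0]; field_simp
      refine ⟨![![s,s,1], ![s,s,-1], ![-t,t,1], ![-t,t,-1]],
        ![lam*c^3/4, -(lam*c^3/4), lam*c^3/4, -(lam*c^3/4)], ?_⟩
      apply MvPolynomial.funext
      intro p
      simp only [Fin.sum_univ_four, smul_eval, map_add, map_mul, map_pow, eval_C, eval_X,
        eval_linForm, hb, Matrix.cons_val_zero, Matrix.cons_val_one, Matrix.head_cons,
        Matrix.cons_val_two, Matrix.tail_cons, Matrix.cons_val_three]
      linear_combination (-(p 2)*((p 0)+(p 1))^2/4) * hs + (-(p 2)*((p 1)-(p 0))^2/4) * ht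
    · -- b ≠ 0, c = 0 : f = xyz + (lam b^3) y^3
      obtain ⟨s, hs0⟩ := root_exists (6 * (lam * b^3))⁻¹
      obtain ⟨t, ht0⟩ := root_exists (-(6 * (lam * b^3))⁻¹)
      have hmu : (6:ℂ) * (lam * b^3) ≠ 0 :=
        mul_ne_zero (by norm_num) (mul_ne_zero hlam (pow_ne_zero 3 hb))
      have hs : 6 * (lam * b^3) * s^2 = 1 := by rw [hs0]; field_simp
      have ht : 6 * (lam * b^3) * t^2 = -1 := by rw [ht0]; field_simp
      refine ⟨![![s,1,s], ![s,-1,s], ![-t,1,t], ![-t,-1,t]],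
        ![lam*b^3/4, -(lam*b^3/4), lam*b^3/4, -(lam*b^3/4)], ?_⟩
      apply MvPolynomial.funext
      intro p
      simp only [Fin.sum_univ_four, smul_eval, map_add, map_mul, map_pow, eval_C, eval_X,
        eval_linForm, hc, Matrix.cons_val_zero, Matrix.cons_val_one, Matrix.head_cons,
        Matrix.cons_val_two, Matrix.tail_cons, Matrix.cons_val_three]
      linear_combination (-(p 1)*((p 0)+(p 2))^2/4) * hs + (-(p 1)*((p 2)-(p 0))^2/4) * ht
    · obtain ⟨r, hr⟩ := sqrt2_exists
      have hA : b * b⁻¹ = 1 := mul_inv_cancel₀ hb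
      have hB : c * c⁻¹ = 1 := mul_inv_cancel₀ hc
      have hL : lam * lam⁻¹ = 1 := mul_inv_cancel₀ hlam
      set ib := b⁻¹ with hib
      set ic := c⁻¹ with hic
      set ilam := lam⁻¹ with hilam
      refine ⟨![![1, 6*lam*(1+r)*b^2*c, 6*lam*(1+r)*b*c^2],
               ![1, 6*lam*(1-r)*b^2*c, 6*lam*(1-r)*b*c^2],
               ![1, 6*lam*b^2*c, -(6*lam*b*c^2)],
               ![1, -(6*lam*b^2*c), 6*lam*b*c^2]],
        ![(1 - r/2) * ilam^2 * ib^3 * ic^3 / 864,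
          (1 + r/2) * ilam^2 * ib^3 * ic^3 / 864,
          -(ilam^2 * ib^3 * ic^3 / 864),
          -(ilam^2 * ib^3 * ic^3 / 864)], ?_⟩
      apply MvPolynomial.funext
      intro p
      simp only [Fin.sum_univ_four, smul_eval, map_add, map_mul, map_pow, eval_C, eval_X,
        eval_linForm, Matrix.cons_val_zero, Matrix.cons_val_one, Matrix.head_cons,
        Matrix.cons_val_two, Matrix.tail_cons, Matrix.cons_val_three]
      linear_combination ((-1/4)*(p 2)^3*b^3*c^6*lam^3*ib^3*ic^3*ilam^2 + (1/4)*(p 2)^3*b^3*c^6*lam^3*ib^3*ic^3*ilam^2*r^2 + (-3/4)*(p 1)*(p 2)^2*b^4*c^5*lam^3*ib^3*ic^3*ilam^2 + (3/4)*(p 1)*(p 2)^2*b^4*c^5*lam^3*ib^3*ic^3*ilam^2*r^2 + (-3/4)*(p 1)^2*(p 2)*b^5*c^4*lam^3*ib^3*ic^3*ilam^2 + (3/4)*(p 1)^2*(p 2)*b^5*c^4*lam^3*ib^3*ic^3*ilam^2*r^2 + (-1/4)*(p 1)^3*b^6*c^3*lam^3*ib^3*ic^3*ilam^2 + (1/4)*(p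 1)^3*b^6*c^3*lam^3*ib^3*ic^3*ilam^2*r^2 + (1/48)*(p 0)^2*(p 2)*b*c^2*lam*ib^3*ic^3*ilam^2 + (1/48)*(p 0)^2*(p 1)*b^2*c*lam*ib^3*ic^3*ilam^2) * hr + ((-1)*(p 2)^3*c^6*lam^3*ic^3*ilam^2 + (-1)*(p 2)^3*b*c^6*lam^3*ib*ic^3*ilam^2 + (-1)*(p 2)^3*b^2*c^6*lam^3*ib^2*ic^3*ilam^2 + (-3)*(p 1)*(p 2)^2*b*c^5*lam^3*ic^3*ilam^2 + (-3)*(p 1)*(p 2)^2*b^2*c^5*lam^3*ib*ic^3*ilam^2 + (-3)*(p 1)*(p 2)^2*b^3*c^5*lam^3*ib^2*ic^3*ilam^2 + (-3)*(p 1)^2*(p 2)*b^2*c^4*lam^3*ic^3*ilam^2 + (-3)*(p 1)^2*(p 2)*b^3*c^4*lam^3*ib*ic^3*ilam^2 + (-3)*(p 1)^2*(p 2)*b^4*c^4*lam^3*ib^2*ic^3*ilam^2 + (-1)*(p 1)^3*b^3*c^3*lam^3*ic^3*ilam^2 + (-1)*(p 1)^3*b^4*c^3*lam^3*ib*ic^3*ilam^2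 + (-1)*(p 1)^3*b^5*c^3*lam^3*ib^2*ic^3*ilam^2 + (-1)*(p 0)*(p 1)*(p 2)*c^3*lam^2*ic^3*ilam^2 + (-1)*(p 0)*(p 1)*(p 2)*b*c^3*lam^2*ib*ic^3*ilam^2 + (-1)*(p 0)*(p 1)*(p 2)*b^2*c^3*lam^2*ib^2*ic^3*ilam^2) * hA + ((-1)*(p 2)^3*c^3*lam^3*ilam^2 + (-1)*(p 2)^3*c^4*lam^3*ic*ilam^2 + (-1)*(p 2)^3*c^5*lam^3*ic^2*ilam^2 + (-3)*(p 1)*(p 2)^2*b*c^2*lam^3*ilam^2 + (-3)*(p 1)*(p 2)^2*b*c^3*lam^3*ic*ilam^2 + (-3)*(p 1)*(p 2)^2*b*c^4*lam^3*ic^2*ilam^2 + (-3)*(p 1)^2*(p 2)*b^2*c*lam^3*ilam^2 + (-3)*(p 1)^2*(p 2)*b^2*c^2*lam^3*ic*ilam^2 + (-3)*(p 1)^2*(p 2)*b^2*c^3*lam^3*ic^2*ilam^2 + (-1)*(p 1)^3*b^3*lam^3*ilam^2 + (-1)*(p 1)^3*b^3*c*lam^3*ic*ilam^2 + (-1)*(p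 1)^3*b^3*c^2*lam^3*ic^2*ilam^2 + (-1)*(p 0)*(p 1)*(p 2)*lam^2*ilam^2 + (-1)*(p 0)*(p 1)*(p 2)*c*lam^2*ic*ilam^2 + (-1)*(p 0)*(p 1)*(p 2)*c^2*lam^2*ic^2*ilam^2) * hB + ((-1)*(p 2)^3*c^3*lam + (-1)*(p 2)^3*c^3*lam^2*ilam + (-3)*(p 1)*(p 2)^2*b*c^2*lam + (-3)*(p 1)*(p 2)^2*b*c^2*lam^2*ilam + (-3)*(p 1)^2*(p 2)*b^2*c*lam + (-3)*(p 1)^2*(p 2)*b^2*c*lam^2*ilam + (-1)*(p 1)^3*b^3*lam + (-1)*(p 1)^3*b^3*lam^2*ilam + (-1)*(p 0)*(p 1)*(p 2) + (-1)*(p 0)*(p 1)*(p 2)*lam*ilam) * hL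

end Stmt12

/-- For `f = xyz + λ(ax+by+cz)³` with `λ ≠ 0` and `abc = 0`, `R(f) = 4`. -/
theorem stmt12 (a b c lam : ℂ) (hlam : lam ≠ 0) (habc : a * b * c = 0) :
    waringRank 3
      ((X 0 * X 1 * X 2 + C lam * (C a * X 0 + C b * X 1 + C c * X 2) ^ 3 :
        MvPolynomial (Fin 3) ℂ)) = 4 := by
  have habc' : a = 0 ∨ b = 0 ∨ c = 0 := by
    rcases mul_eq_zero.mp habc with h | h
    · rcases mul_eq_zero.mp h with h' | h'
      · exact Or.inl h'
      · exact Or.inr (Or.inl h')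
    · exact Or.inr (Or.inr h)
  rcases habc' with h | h | h
  · rw [h]
    simpa only [map_zero, zero_mul, zero_add] using Stmt12.rank_a0 b c lam hlam
  · rw [h]
    simpa only [map_zero, zero_mul, add_zero, zero_add] using Stmt12.rank_b0 a c lam hlam
  · rw [h]
    simpa only [map_zero, zero_mul, add_zero] using Stmt12.rank_c0 a b lam hlam
end

section
/- Let k ≥ 2, f = x^k y^k + λ(ax + by)^{2k} with λ ≠ 0 and ab = 0 (and (a,b) ≠ (0,0)). Then the Waring rank of f over ℂ equals k+1. -/
open MvPolynomial

set_option maxHeartbeats 1000000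
open Finset

noncomputable def expSig (n m : ℕ) : Fin 2 →₀ ℕ :=
  Finsupp.single 0 m + Finsupp.single 1 (n - m)

lemma expSig_apply_zero (n m : ℕ) : expSig n m 0 = m := by
  simp [expSig]

lemma expSig_injective (n : ℕ) : Function.Injective (expSig n) := by
  intro a b h
  have := congrArg (fun s => s 0) h
  simpa [expSig] using this

lemma expand (α β : ℂ) (n : ℕ) :
    (C α * X 0 + C β * X 1 : MvPolynomial (Fin 2) ℂ) ^ n =
      ∑ m ∈ range (n + 1),
        monomial (expSig n m) (α ^ m * β ^ (n - m) * (n.choose m : ℂ)) := by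
  rw [add_pow]
  refine Finset.sum_congr rfl fun m hm => ?_
  have : ((n.choose m : ℕ) : MvPolynomial (Fin 2) ℂ) = C ((n.choose m : ℕ) : ℂ) := by
    simp
  rw [mul_pow, mul_pow, ← C_pow, ← C_pow, this, X_pow_eq_monomial, X_pow_eq_monomial, expSig]
  rw [mul_mul_mul_comm, monomial_mul, ← C_mul, mul_comm _ (C _), ← mul_assoc, ← C_mul, C_mul_monomial]
  ring_nf

lemma coeff_expand (α β : ℂ) (n m : ℕ) (hm : m ≤ n) :
    coeff (expSig n m) ((C α * X 0 + C β * X 1 : MvPolynomial (Fin 2) ℂ) ^ n) =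
      α ^ m * β ^ (n - m) * (n.choose m : ℂ) := by
  rw [expand, coeff_sum]
  rw [Finset.sum_eq_single m]
  · rw [coeff_monomial, if_pos rfl]
  · intro b _ hb
    rw [coeff_monomial, if_neg fun h => hb (expSig_injective n h)]
  · intro h
    exact absurd (Finset.mem_range.mpr (Nat.lt_succ_of_le hm)) h

lemma fRepr (k : ℕ) (c : ℂ) :
    ((X 0) ^ k * (X 1) ^ k + C c * (X 0) ^ (2 * k) : MvPolynomial (Fin 2) ℂ) =
      monomial (expSig (2 * k) k) 1 + monomial (expSig (2 * k) (2 * k)) c := by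
  have h1 : expSig (2 * k) k = Finsupp.single 0 k + Finsupp.single 1 k := by
    rw [expSig, two_mul, Nat.add_sub_cancel]
  have h2 : expSig (2 * k) (2 * k) = Finsupp.single 0 (2 * k) := by
    rw [expSig, Nat.sub_self, Finsupp.single_zero, add_zero]
  rw [h1, h2, X_pow_eq_monomial, X_pow_eq_monomial, X_pow_eq_monomial, monomial_mul,
    C_mul_monomial, one_mul, mul_one]

lemma exists_gamma (k : ℕ) (hk : 2 ≤ k) (c' : ℂ) (hc' : c' ≠ 0) :
    ∃ γ : Fin (k + 1) → ℂ, Function.Injective γ ∧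
      ∃ μ : ℂ, ∀ i, γ i ^ (k + 1) = c' * γ i - μ := by
  classical
  set Q : Polynomial ℂ := Polynomial.X ^ k - Polynomial.C (c' / (k + 1)) with hQ
  set bad : Finset ℂ := Q.roots.toFinset.image (fun t => c' * t * k / (k + 1)) with hbad
  obtain ⟨μ, hμ⟩ := Infinite.exists_notMem_finset bad
  set P : Polynomial ℂ :=
    Polynomial.X ^ (k + 1) + (Polynomial.C μ - Polynomial.C c' * Polynomial.X) with hP
  have hdlt : (Polynomial.C μ - Polynomial.C c' * Polynomial.X).degree
      < ((k + 1 : ℕ) : WithBot ℕ) := by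
    refine lt_of_le_of_lt (Polynomial.degree_sub_le _ _) ?_
    have h1 : (Polynomial.C μ : Polynomial ℂ).degree ≤ (1 : WithBot ℕ) :=
      le_trans Polynomial.degree_C_le (by norm_num)
    have h2 : (Polynomial.C c' * Polynomial.X : Polynomial ℂ).degree ≤ (1 : WithBot ℕ) :=
      Polynomial.degree_C_mul_X_le c'
    refine lt_of_le_of_lt (max_le h1 h2) ?_
    exact_mod_cast by omega
  have hmonic : P.Monic := Polynomial.monic_X_pow_add hdlt
  have hP0 : P ≠ 0 := hmonic.ne_zero
  have hdeg : P.natDegree = k + 1 := by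
    have : P.degree = ((k + 1 : ℕ) : WithBot ℕ) := by
      rw [hP, Polynomial.degree_add_eq_left_of_degree_lt (by
        rw [Polynomial.degree_X_pow]; exact hdlt), Polynomial.degree_X_pow]
    exact Polynomial.natDegree_eq_of_degree_eq_some this
  have hcardroots : Multiset.card P.roots = k + 1 := by
    rw [← hdeg]
    exact Polynomial.splits_iff_card_roots.mp (IsAlgClosed.splits P)
  have hk1 : ((k : ℂ) + 1) ≠ 0 := Nat.cast_add_one_ne_zero k
  have hnodup : P.roots.Nodup := by
    rw [Multiset.nodup_iff_count_le_one]
    intro r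
    rw [Polynomial.count_roots, Polynomial.rootMultiplicity_le_iff hP0]
    rintro ⟨g, hg⟩
    have hPr : P.eval r = 0 := by rw [hg]; simp
    have hP'r : P.derivative.eval r = 0 := by
      rw [hg]
      simp [Polynomial.derivative_mul, Polynomial.derivative_pow]
    have hder : P.derivative = Polynomial.C ((k : ℂ) + 1) * Polynomial.X ^ k
        - Polynomial.C c' := by
      rw [hP]
      simp [Polynomial.derivative_pow]
      ring
    rw [hder] at hP'r
    simp only [Polynomial.eval_sub, Polynomial.eval_mul, Polynomial.eval_C,
      Polynomial.eval_pow, Polynomial.eval_X] at hP'r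
    have hrk : r ^ k = c' / ((k : ℂ) + 1) := by
      field_simp
      linear_combination hP'r
    have hrQ : r ∈ Q.roots := by
      rw [Polynomial.mem_roots']
      refine ⟨?_, ?_⟩
      · rw [hQ]
        intro h
        have := congrArg Polynomial.natDegree h
        rw [Polynomial.natDegree_X_pow_sub_C] at this
        simp at this
        omega
      · rw [hQ]
        simp [Polynomial.IsRoot, hrk]
    have hμbad : μ = c' * r * k / (k + 1) := by
      rw [hP] at hPr
      simp only [Polynomial.eval_add, Polynomial.eval_sub, Polynomial.eval_pow,
        Polynomial.eval_mul, Polynomial.eval_C, Polynomial.eval_X] at hPr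
      have hr1' : ((k : ℂ) + 1) * r ^ (k + 1) = r * c' := by
        rw [pow_succ]
        linear_combination r * hP'r
      rw [eq_div_iff hk1]
      linear_combination ((k : ℂ) + 1) * hPr - hr1'
    exact hμ (by
      rw [hbad]
      exact Finset.mem_image.mpr ⟨r, Multiset.mem_toFinset.mpr hrQ, hμbad.symm⟩)
  set S := P.roots.toFinset with hS
  have hScard : S.card = k + 1 := by
    rw [hS, Multiset.toFinset_card_of_nodup hnodup, hcardroots]
  refine ⟨fun i => (S.equivFin.symm (Fin.cast hScard.symm i) : ℂ), ?_, μ, ?_⟩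
  · intro i j hij
    have h2 := S.equivFin.symm.injective (Subtype.ext hij)
    have h3 : (i : ℕ) = (j : ℕ) := by simpa using congrArg Fin.val h2
    exact Fin.ext h3
  · intro i
    have hmem : ((S.equivFin.symm (Fin.cast hScard.symm i) : ℂ)) ∈ P.roots :=
      Multiset.mem_toFinset.mp (S.equivFin.symm _).2
    have hroot := ((Polynomial.mem_roots hP0).mp hmem)
    rw [hP] at hroot
    simp only [Polynomial.IsRoot, Polynomial.eval_add, Polynomial.eval_sub,
      Polynomial.eval_pow, Polynomial.eval_mul, Polynomial.eval_C, Polynomial.eval_X] at hroot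
    linear_combination hroot

lemma collapse (k : ℕ) (hk : 2 ≤ k) (c : ℂ) :
    (∑ m ∈ range (2 * k + 1), monomial (expSig (2 * k) m)
        (if m = k then (1 : ℂ) else if m = 2 * k then c else 0)) =
      monomial (expSig (2 * k) k) 1 + monomial (expSig (2 * k) (2 * k)) c := by
  have h1 : ∀ m ∈ range (2 * k + 1),
      monomial (expSig (2 * k) m) (if m = k then (1 : ℂ) else if m = 2 * k then c else 0) =
        (if m = k then monomial (expSig (2 * k) k) (1 : ℂ) else 0) +
          (if m = 2 * k then monomial (expSig (2 * k) (2 * k)) c else 0) := by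
    intro m _
    split_ifs with h h' <;> simp_all <;> omega
  rw [Finset.sum_congr rfl h1, Finset.sum_add_distrib, Finset.sum_ite_eq', Finset.sum_ite_eq',
    if_pos (Finset.mem_range.mpr (by omega)), if_pos (Finset.mem_range.mpr (by omega))]

lemma mem_upper (k : ℕ) (hk : 2 ≤ k) (c : ℂ) (hc : c ≠ 0) :
    ∃ (a : Fin (k + 1) → Fin 2 → ℂ) (w : Fin (k + 1) → ℂ),
      ((X 0) ^ k * (X 1) ^ k + C c * (X 0) ^ (2 * k) : MvPolynomial (Fin 2) ℂ) =
        ∑ i, w i • (linForm (a i)) ^ (2 * k) := by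
  classical
  set s : ℂ := ((2 * k).choose k : ℂ) with hs
  have hs0 : s ≠ 0 := Nat.cast_ne_zero.mpr (Nat.choose_pos (by omega)).ne'
  obtain ⟨γ, hγinj, μ, hγpow⟩ := exists_gamma k hk (c * s) (mul_ne_zero hc hs0)
  set V : Matrix (Fin (k + 1)) (Fin (k + 1)) ℂ := (Matrix.vandermonde γ).transpose with hV
  have hdet : V.det ≠ 0 := by
    rw [hV, Matrix.det_transpose]
    exact Matrix.det_vandermonde_ne_zero_iff.mpr hγinj
  set v : Fin (k + 1) → ℂ := fun m => if (m : ℕ) = k then s⁻¹ else 0 with hv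
  set w : Fin (k + 1) → ℂ := V⁻¹.mulVec v with hw
  have hVw : V.mulVec w = v := by
    rw [hw, Matrix.mulVec_mulVec, Matrix.mul_nonsing_inv _ (isUnit_iff_ne_zero.mpr hdet),
      Matrix.one_mulVec]
  set p : ℕ → ℂ := fun m => ∑ j, w j * γ j ^ m with hp
  have hple : ∀ m : ℕ, m ≤ k → p m = if m = k then s⁻¹ else 0 := by
    intro m hm
    have := congrFun hVw ⟨m, by omega⟩
    simp only [Matrix.mulVec, dotProduct, hV, Matrix.transpose_apply,
      Matrix.vandermonde_apply, hv] at this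
    rw [hp]
    simp only []
    rw [← this]
    exact Finset.sum_congr rfl fun j _ => mul_comm _ _
  have hrec : ∀ m : ℕ, p (m + (k + 1)) = c * s * p (m + 1) - μ * p m := by
    intro m
    rw [hp]
    simp only []
    rw [Finset.mul_sum, Finset.mul_sum, ← Finset.sum_sub_distrib]
    refine Finset.sum_congr rfl fun j _ => ?_
    have h := hγpow j
    have : γ j ^ (m + (k + 1)) = γ j ^ m * γ j ^ (k + 1) := by rw [pow_add]
    rw [this, h]
    ring
  have hfull : ∀ m : ℕ, m ≤ 2 * k →
      p m = if m = k then s⁻¹ else if m = 2 * k then c else 0 := by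
    intro m hm
    by_cases h1 : m ≤ k
    · rw [hple m h1]
      split_ifs with h2 h3 <;> first | rfl | omega
    · push_neg at h1
      have hm' : m = (m - (k + 1)) + (k + 1) := by omega
      set m' := m - (k + 1) with hm'def
      have h2 : m' + 1 ≤ k := by omega
      have h3 : m' ≤ k := by omega
      rw [hm', hrec m', hple _ h2, hple _ h3]
      have h4 : m' ≠ k := by omega
      rw [if_neg h4, mul_zero, sub_zero]
      by_cases h5 : m = 2 * k
      · have : m' + 1 = k := by omega
        rw [if_pos this, if_neg (by omega), if_pos (by omega)]
        field_simp
      · have : m' + 1 ≠ k := by omega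
        rw [if_neg this, if_neg (by omega), if_neg (by omega), mul_zero]
  refine ⟨fun i => ![γ i, 1], w, ?_⟩
  have hlin : ∀ i, linForm (![γ i, 1] : Fin 2 → ℂ) = C (γ i) * X 0 + C 1 * X 1 := by
    intro i
    rw [linForm, Fin.sum_univ_two]
    simp
  calc ((X 0) ^ k * (X 1) ^ k + C c * (X 0) ^ (2 * k) : MvPolynomial (Fin 2) ℂ)
      = monomial (expSig (2 * k) k) 1 + monomial (expSig (2 * k) (2 * k)) c := fRepr k c
    _ = ∑ m ∈ range (2 * k + 1), monomial (expSig (2 * k) m)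
          (if m = k then (1 : ℂ) else if m = 2 * k then c else 0) := (collapse k hk c).symm
    _ = ∑ m ∈ range (2 * k + 1), monomial (expSig (2 * k) m)
          ((p m) * ((2 * k).choose m : ℂ)) := by
        refine Finset.sum_congr rfl fun m hm => ?_
        congr 1
        rw [hfull m (by exact Nat.lt_succ_iff.mp (Finset.mem_range.mp hm))]
        split_ifs with h1 h2
        · rw [h1, ← hs, inv_mul_cancel₀ hs0]
        · rw [h2, Nat.choose_self, Nat.cast_one, mul_one]
        · rw [zero_mul]
    _ = ∑ m ∈ range (2 * k + 1), ∑ i, monomial (expSig (2 * k) m)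
          (w i * (γ i ^ m * (1 : ℂ) ^ (2 * k - m) * ((2 * k).choose m : ℂ))) := by
        refine Finset.sum_congr rfl fun m hm => ?_
        rw [← map_sum]
        congr 1
        rw [hp]
        simp only [one_pow, mul_one]
        rw [Finset.sum_mul]
        exact Finset.sum_congr rfl fun j _ => by ring
    _ = ∑ i, w i • (C (γ i) * X 0 + C 1 * X 1 : MvPolynomial (Fin 2) ℂ) ^ (2 * k) := by
        rw [Finset.sum_comm]
        refine Finset.sum_congr rfl fun i _ => ?_
        rw [_root_.expand, Finset.smul_sum]
        exact Finset.sum_congr rfl fun m _ => by rw [smul_monomial, smul_eq_mul]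
    _ = ∑ i, w i • (linForm (![γ i, 1] : Fin 2 → ℂ)) ^ (2 * k) := by
        exact Finset.sum_congr rfl fun i _ => by rw [hlin]

lemma mem_lower (k : ℕ) (hk : 2 ≤ k) (c : ℂ) (hc : c ≠ 0) (r : ℕ)
    (a : Fin r → Fin 2 → ℂ) (w : Fin r → ℂ)
    (hf : ((X 0) ^ k * (X 1) ^ k + C c * (X 0) ^ (2 * k) : MvPolynomial (Fin 2) ℂ) =
      ∑ i, w i • (linForm (a i)) ^ (2 * k)) : k + 1 ≤ r := by
  classical
  by_contra hr
  push_neg at hr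
  set s : ℂ := ((2 * k).choose k : ℂ) with hs
  have hs0 : s ≠ 0 := Nat.cast_ne_zero.mpr (Nat.choose_pos (by omega)).ne'
  set q : ℕ → ℂ := fun m => ∑ i, w i * (a i 0 ^ m * a i 1 ^ (2 * k - m)) with hq
  have hcoeff : ∀ m : ℕ, m ≤ 2 * k →
      ((2 * k).choose m : ℂ) * q m = (if m = k then 1 else if m = 2 * k then c else 0) := by
    intro m hm
    have h1 := congrArg (coeff (expSig (2 * k) m)) hf
    rw [fRepr, coeff_add, coeff_monomial, coeff_monomial, coeff_sum] at h1
    have h2 : ∀ i : Fin r, coeff (expSig (2 * k) m) (w i • (linForm (a i)) ^ (2 * k)) =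
        w i * (a i 0 ^ m * a i 1 ^ (2 * k - m) * ((2 * k).choose m : ℂ)) := by
      intro i
      rw [coeff_smul, smul_eq_mul]
      congr 1
      have hl : linForm (a i) = C (a i 0) * X 0 + C (a i 1) * X 1 := by
        rw [linForm, Fin.sum_univ_two]
      rw [hl, coeff_expand _ _ _ _ hm]
    rw [Finset.sum_congr rfl fun i _ => h2 i] at h1
    have h3 : (∑ i : Fin r, w i * (a i 0 ^ m * a i 1 ^ (2 * k - m) * ((2 * k).choose m : ℂ))) =
        ((2 * k).choose m : ℂ) * q m := by
      rw [hq, Finset.mul_sum]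
      exact Finset.sum_congr rfl fun i _ => by ring
    rw [h3] at h1
    rw [← h1]
    have e1 : (expSig (2 * k) k = expSig (2 * k) m) ↔ k = m := (expSig_injective _).eq_iff
    have e2 : (expSig (2 * k) (2 * k) = expSig (2 * k) m) ↔ 2 * k = m := (expSig_injective _).eq_iff
    simp only [e1, e2]
    by_cases hmk : m = k
    · subst hmk; rw [if_pos rfl, if_neg (by omega), if_pos rfl]; simp
    · by_cases hm2k : m = 2 * k
      · subst hm2k
        have hne : ¬k = 2 * k := by omega
        simp [hmk, hne]
      · rw [if_neg (by omega), if_neg (by omega), if_neg hmk, if_neg hm2k, add_zero]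
  have hik : ∀ i : Fin (k + 1), (i : ℕ) ≤ k := fun i => Nat.lt_succ_iff.mp i.isLt
  set u : Fin r → (Fin (k + 1) → ℂ) := fun i j => a i 0 ^ (j : ℕ) * a i 1 ^ (k - (j : ℕ)) with hu
  set N : Matrix (Fin (k + 1)) (Fin (k + 1)) ℂ := fun i j => q ((i : ℕ) + (j : ℕ)) with hN
  have hNval : ∀ i j : Fin (k + 1), N i j =
      (if (i : ℕ) + (j : ℕ) = k then s⁻¹ else if (i : ℕ) + (j : ℕ) = 2 * k then c else 0) := by
    intro i j
    have hij : (i : ℕ) + (j : ℕ) ≤ 2 * k := by have := hik i; have := hik j; omega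
    have h := hcoeff _ hij
    by_cases h1 : (i : ℕ) + (j : ℕ) = k
    · rw [if_pos h1, hN]
      simp only []
      rw [h1] at h ⊢
      rw [if_pos rfl] at h
      rw [← hs] at h
      exact (inv_eq_of_mul_eq_one_right h).symm
    · by_cases h2 : (i : ℕ) + (j : ℕ) = 2 * k
      · rw [if_neg h1, if_pos h2, hN]
        simp only []
        rw [h2] at h ⊢
        rw [if_neg (by omega), if_pos rfl, Nat.choose_self, Nat.cast_one, one_mul] at h
        exact h
      · rw [if_neg h1, if_neg h2, hN]
        simp only []
        rw [if_neg h1, if_neg h2] at h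
        have hch : (((2 * k).choose ((i : ℕ) + (j : ℕ))) : ℂ) ≠ 0 :=
          Nat.cast_ne_zero.mpr (Nat.choose_pos hij).ne'
        exact (mul_eq_zero.mp h).resolve_left hch
  have hNsum : ∀ i j : Fin (k + 1), N i j = ∑ i', w i' * (u i' i * u i' j) := by
    intro i j
    rw [hN, hq]
    simp only []
    refine Finset.sum_congr rfl fun i' _ => ?_
    rw [hu]
    simp only []
    have e : 2 * k - ((i : ℕ) + (j : ℕ)) = (k - (i : ℕ)) + (k - (j : ℕ)) := by
      have := hik i; have := hik j; omega
    rw [e, pow_add, pow_add]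
    ring
  set M : Matrix (Fin (k + 1)) (Fin (k + 1)) ℂ := fun l j =>
    (if (l : ℕ) + (j : ℕ) = k then s else 0) +
      (if (l : ℕ) = 0 ∧ (j : ℕ) = 0 then -(c * s ^ 2) else 0) with hM
  have hNM : N * M = 1 := by
    ext i j
    rw [Matrix.mul_apply, Matrix.one_apply]
    have hNsplit : ∀ l : Fin (k + 1), N i l =
        (if (i : ℕ) + (l : ℕ) = k then s⁻¹ else 0) +
          (if (i : ℕ) + (l : ℕ) = 2 * k then c else 0) := by
      intro l
      rw [hNval i l]
      by_cases hA : (i : ℕ) + (l : ℕ) = k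
      · rw [if_pos hA, if_pos hA, if_neg (by omega), add_zero]
      · rw [if_neg hA, if_neg hA, zero_add]
    have step : ∀ l : Fin (k + 1), N i l * M l j =
        ((if (i : ℕ) + (l : ℕ) = k ∧ (l : ℕ) + (j : ℕ) = k then s⁻¹ * s else 0)
          + (if (i : ℕ) + (l : ℕ) = k ∧ (l : ℕ) = 0 ∧ (j : ℕ) = 0 then s⁻¹ * (-(c * s ^ 2)) else 0)
          + (if (i : ℕ) + (l : ℕ) = 2 * k ∧ (l : ℕ) + (j : ℕ) = k then c * s else 0)
          + (if (i : ℕ) + (l : ℕ) = 2 * k ∧ (l : ℕ) = 0 ∧ (j : ℕ) = 0 then c * (-(c * s ^ 2)) else 0)) := by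
      intro l
      have hmul : ∀ (P Q : Prop) [Decidable P] [Decidable Q] (x y : ℂ),
          (if P then x else 0) * (if Q then y else 0) = (if P ∧ Q then x * y else 0) := by
        intro P Q _ _ x y
        split_ifs with h1 h2 h3 <;> simp_all
      rw [hNsplit l, hM]
      simp only []
      rw [add_mul, mul_add, mul_add, hmul, hmul, hmul, hmul]
      ring
    rw [Finset.sum_congr rfl fun l _ => step l]
    rw [Finset.sum_add_distrib, Finset.sum_add_distrib, Finset.sum_add_distrib]
    have hT1 : (∑ l : Fin (k + 1), if (i : ℕ) + (l : ℕ) = k ∧ (l : ℕ) + (j : ℕ) = k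
        then s⁻¹ * s else 0) = (if i = j then (1 : ℂ) else 0) := by
      by_cases hij : i = j
      · subst hij
        rw [if_pos rfl]
        have hcong : ∀ l : Fin (k + 1), l ∈ Finset.univ → (if (i : ℕ) + (l : ℕ) = k ∧ (l : ℕ) + (i : ℕ) = k
            then s⁻¹ * s else 0) = (if l = (⟨k - (i : ℕ), by omega⟩ : Fin (k + 1))
            then s⁻¹ * s else 0) := by
          intro l _
          refine if_congr ?_ rfl rfl
          rw [Fin.ext_iff]
          have := hik i; have := hik l
          constructor
          · rintro ⟨h1, -⟩; simp only []; omega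
          · intro h; simp only [] at h; omega
        rw [Finset.sum_congr rfl hcong, Finset.sum_ite_eq' Finset.univ _ fun _ => s⁻¹ * s,
          if_pos (Finset.mem_univ _), inv_mul_cancel₀ hs0]
      · rw [if_neg hij]
        refine Finset.sum_eq_zero fun l _ => if_neg ?_
        rintro ⟨h1, h2⟩
        exact hij (Fin.ext (by omega))
    have hT2 : (∑ l : Fin (k + 1), if (i : ℕ) + (l : ℕ) = k ∧ (l : ℕ) = 0 ∧ (j : ℕ) = 0
        then s⁻¹ * (-(c * s ^ 2)) else 0) =
        (if (i : ℕ) = k ∧ (j : ℕ) = 0 then -(c * s) else 0) := by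
      by_cases hc2 : (i : ℕ) = k ∧ (j : ℕ) = 0
      · rw [if_pos hc2]
        have hcong : ∀ l : Fin (k + 1), l ∈ Finset.univ → (if (i : ℕ) + (l : ℕ) = k ∧ (l : ℕ) = 0 ∧ (j : ℕ) = 0
            then s⁻¹ * (-(c * s ^ 2)) else 0) = (if l = (⟨0, by omega⟩ : Fin (k + 1))
            then s⁻¹ * (-(c * s ^ 2)) else 0) := by
          intro l _
          refine if_congr ?_ rfl rfl
          rw [Fin.ext_iff]
          simp only []
          omega
        rw [Finset.sum_congr rfl hcong, Finset.sum_ite_eq' Finset.univ _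
          (fun _ => s⁻¹ * (-(c * s ^ 2))), if_pos (Finset.mem_univ _)]
        field_simp
      · rw [if_neg hc2]
        refine Finset.sum_eq_zero fun l _ => if_neg ?_
        rintro ⟨h1, h2, h3⟩
        exact hc2 ⟨by omega, h3⟩
    have hT3 : (∑ l : Fin (k + 1), if (i : ℕ) + (l : ℕ) = 2 * k ∧ (l : ℕ) + (j : ℕ) = k
        then c * s else 0) = (if (i : ℕ) = k ∧ (j : ℕ) = 0 then c * s else 0) := by
      by_cases hc2 : (i : ℕ) = k ∧ (j : ℕ) = 0
      · rw [if_pos hc2]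
        have hcong : ∀ l : Fin (k + 1), l ∈ Finset.univ → (if (i : ℕ) + (l : ℕ) = 2 * k ∧ (l : ℕ) + (j : ℕ) = k
            then c * s else 0) = (if l = (⟨k, by omega⟩ : Fin (k + 1))
            then c * s else 0) := by
          intro l _
          refine if_congr ?_ rfl rfl
          rw [Fin.ext_iff]
          have := hik i; have := hik l
          simp only []
          omega
        rw [Finset.sum_congr rfl hcong, Finset.sum_ite_eq' Finset.univ _ (fun _ => c * s),
          if_pos (Finset.mem_univ _)]
      · rw [if_neg hc2]
        refine Finset.sum_eq_zero fun l _ => if_neg ?_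
        rintro ⟨h1, h2⟩
        have := hik i; have := hik l
        exact hc2 ⟨by omega, by omega⟩
    have hT4 : (∑ l : Fin (k + 1), if (i : ℕ) + (l : ℕ) = 2 * k ∧ (l : ℕ) = 0 ∧ (j : ℕ) = 0
        then c * (-(c * s ^ 2)) else 0) = 0 := by
      refine Finset.sum_eq_zero fun l _ => if_neg ?_
      rintro ⟨h1, h2, -⟩
      have := hik i
      omega
    rw [hT1, hT2, hT3, hT4, add_zero]
    by_cases hc2 : (i : ℕ) = k ∧ (j : ℕ) = 0
    · rw [if_pos hc2, if_pos hc2]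
      have : ¬ i = j := by
        intro h
        rw [Fin.ext_iff] at h
        omega
      rw [if_neg this]
      ring
    · rw [if_neg hc2, if_neg hc2]
      ring
  have hmulvec : ∀ x : Fin (k + 1) → ℂ,
      N.mulVec x ∈ Submodule.span ℂ (Set.range u) := by
    intro x
    have hrepr : N.mulVec x = ∑ i', (w i' * ∑ j, u i' j * x j) • u i' := by
      funext i0
      simp only [Matrix.mulVec, dotProduct, Finset.sum_apply, Pi.smul_apply,
        smul_eq_mul]
      rw [Finset.sum_congr rfl fun j _ => by rw [hNsum i0 j, Finset.sum_mul]]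
      rw [Finset.sum_comm]
      refine Finset.sum_congr rfl fun i' _ => ?_
      rw [Finset.mul_sum, Finset.sum_mul]
      refine Finset.sum_congr rfl fun j _ => by ring
    rw [hrepr]
    exact Submodule.sum_mem _ fun i' _ =>
      Submodule.smul_mem _ _ (Submodule.subset_span ⟨i', rfl⟩)
  have hspan : Submodule.span ℂ (Set.range u) = ⊤ := by
    rw [eq_top_iff]
    intro v _
    have hv : N.mulVec (M.mulVec v) = v := by
      rw [Matrix.mulVec_mulVec, hNM, Matrix.one_mulVec]
    rw [← hv]
    exact hmulvec _
  have h1 : k + 1 = Module.finrank ℂ (Fin (k + 1) → ℂ) := by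
    rw [Module.finrank_fintype_fun_eq_card, Fintype.card_fin]
  have h2 : Module.finrank ℂ (Fin (k + 1) → ℂ) ≤ r := by
    calc Module.finrank ℂ (Fin (k + 1) → ℂ)
        = Module.finrank ℂ (⊤ : Submodule ℂ (Fin (k + 1) → ℂ)) := (finrank_top _ _).symm
      _ = Module.finrank ℂ (Submodule.span ℂ (Set.range u)) := by rw [hspan]
      _ ≤ Fintype.card (Fin r) := finrank_range_le_card u
      _ = r := Fintype.card_fin r
  omega

lemma rename_linForm {n : ℕ} (σ : Equiv.Perm (Fin n)) (a : Fin n → ℂ) :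
    rename σ (linForm a) = linForm (a ∘ σ.symm) := by
  rw [linForm, linForm, map_sum]
  refine Fintype.sum_equiv σ _ _ fun j => ?_
  simp [Function.comp]

lemma waringRank_rename {n d : ℕ} (σ : Equiv.Perm (Fin n)) (f : MvPolynomial (Fin n) ℂ) :
    waringRank d (rename σ f) = waringRank d f := by
  have hdir : ∀ (τ : Equiv.Perm (Fin n)) (g : MvPolynomial (Fin n) ℂ) (r : ℕ)
      (a : Fin r → Fin n → ℂ) (c : Fin r → ℂ), g = ∑ i, c i • (linForm (a i)) ^ d →
      rename τ g = ∑ i, c i • (linForm (a i ∘ τ.symm)) ^ d := by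
    intro τ g r a c h
    rw [h, map_sum]
    refine Finset.sum_congr rfl fun i _ => ?_
    rw [map_smul, map_pow, rename_linForm]
  rw [waringRank, waringRank]
  congr 1
  ext r
  constructor
  · rintro ⟨a, c, h⟩
    refine ⟨fun i => a i ∘ σ, c, ?_⟩
    have this1 := hdir σ.symm (rename σ f) r a c h
    rw [rename_rename, Equiv.symm_comp_self, rename_id] at this1
    simp only [Equiv.symm_symm] at this1
    exact this1
  · rintro ⟨a, c, h⟩
    exact ⟨fun i => a i ∘ σ.symm, c, hdir σ f r a c h⟩

lemma key (k : ℕ) (hk : 2 ≤ k) (c : ℂ) (hc : c ≠ 0) :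
    waringRank (2 * k)
      ((X 0) ^ k * (X 1) ^ k + C c * (X 0) ^ (2 * k) : MvPolynomial (Fin 2) ℂ) = k + 1 := by
  obtain ⟨a, w, hdec⟩ := mem_upper k hk c hc
  rw [waringRank]
  apply le_antisymm
  · exact Nat.sInf_le ⟨a, w, hdec⟩
  · refine le_csInf ⟨k + 1, a, w, hdec⟩ ?_
    rintro r ⟨a', w', h'⟩
    exact mem_lower k hk c hc r a' w' h'

/-- For `k ≥ 2`, `f = x^k y^k + λ(ax+by)^{2k}` with `λ ≠ 0`, `ab = 0`, `(a,b) ≠ (0,0)`,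
the Waring rank of `f` is `k + 1`. -/
theorem stmt13 (k : ℕ) (hk : 2 ≤ k) (a b lam : ℂ) (hlam : lam ≠ 0)
    (hab : a * b = 0) (hne : ¬(a = 0 ∧ b = 0)) :
    waringRank (2 * k)
      ((X 0) ^ k * (X 1) ^ k + C lam * (C a * X 0 + C b * X 1) ^ (2 * k) :
        MvPolynomial (Fin 2) ℂ) = k + 1 := by
  rcases mul_eq_zero.mp hab with ha | hb
  · have hb0 : b ≠ 0 := fun h => hne ⟨ha, h⟩
    subst ha
    have hform : ((X 0) ^ k * (X 1) ^ k + C lam * (C (0 : ℂ) * X 0 + C b * X 1) ^ (2 * k) :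
        MvPolynomial (Fin 2) ℂ) = rename (Equiv.swap (0 : Fin 2) 1)
          ((X 0) ^ k * (X 1) ^ k + C (lam * b ^ (2 * k)) * (X 0) ^ (2 * k)) := by
      simp only [map_add, map_mul, map_pow, rename_X, rename_C, Equiv.swap_apply_left,
        Equiv.swap_apply_right, C_0, zero_mul, zero_add, mul_pow, C_pow, C_mul]
      ring
    rw [hform, waringRank_rename]
    exact key k hk _ (mul_ne_zero hlam (pow_ne_zero _ hb0))
  · have ha0 : a ≠ 0 := fun h => hne ⟨h, hb⟩
    subst hb
    have hform : ((X 0) ^ k * (X 1) ^ k + C lam * (C a * X 0 + C (0 : ℂ) * X 1) ^ (2 * k) :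
        MvPolynomial (Fin 2) ℂ) =
        (X 0) ^ k * (X 1) ^ k + C (lam * a ^ (2 * k)) * (X 0) ^ (2 * k) := by
      simp only [C_0, zero_mul, add_zero, mul_pow, C_pow, C_mul]
      ring
    rw [hform]
    exact key k hk _ (mul_ne_zero hlam (pow_ne_zero _ ha0))
end

section
/- Cayley–Bacharach from two decompositions: Let f be a homogeneous polynomial of degree d over ℂ and let 𝕏, 𝕐 ⊆ ℙ^n be two disjoint irredundant Waring decompositions of f. Then 𝕏 ∪ 𝕐 satisfies the Cayley–Bacharach property in degree d: every form of degree d vanishing on all but one point of 𝕏 ∪ 𝕐 vanishes at the remaining point as well. -/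
open MvPolynomial

/-- A finite set of points of `ℙⁿ` is a Waring decomposition of `f` (of degree `d`)
if `f` lies in the span of the `d`-th powers of linear forms representing the points. -/
noncomputable def isDecomp {n : ℕ} (d : ℕ) (f : MvPolynomial (Fin (n+1)) ℂ)
    (D : Finset (Projectivization ℂ (Fin (n+1) → ℂ))) : Prop :=
  f ∈ Submodule.span ℂ
    ((fun p : Projectivization ℂ (Fin (n+1) → ℂ) => (linForm p.rep) ^ d) '' D)

lemma prod_X_pow_univ {N : ℕ} (k : Fin N → ℕ) :
    (∏ j, (X j : MvPolynomial (Fin N) ℂ) ^ k j)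
      = monomial (Finsupp.equivFunOnFinite.symm k) 1 := by
  rw [← prod_X_pow_eq_monomial]
  refine (Finset.prod_subset (Finset.subset_univ _) ?_).symm
  intro x _ hx
  have : (Finsupp.equivFunOnFinite.symm k) x = 0 := by
    simpa using Finsupp.notMem_support_iff.mp hx
  simp only [Finsupp.coe_equivFunOnFinite_symm] at this ⊢
  simp [this]

lemma coeff_linForm_pow {N d : ℕ} (a : Fin N → ℂ) (m : Fin N →₀ ℕ)
    (hm : ∑ j, m j = d) :
    coeff m (linForm a ^ d)
      = (Nat.multinomial Finset.univ ⇑m : ℂ) * ∏ j, a j ^ m j := by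
  have expand : linForm a ^ d = ∑ k ∈ Finset.piAntidiag Finset.univ d,
      (Nat.multinomial Finset.univ k : MvPolynomial (Fin N) ℂ) *
        ∏ j, (C (a j) * X j) ^ k j := by
    rw [linForm, Finset.sum_pow_eq_sum_piAntidiag]
  have term_eq : ∀ k : Fin N → ℕ,
      (Nat.multinomial Finset.univ k : MvPolynomial (Fin N) ℂ) *
        ∏ j, (C (a j) * X j) ^ k j
      = monomial (Finsupp.equivFunOnFinite.symm k)
          ((Nat.multinomial Finset.univ k : ℂ) * ∏ j, a j ^ k j) := by
    intro k
    have h1 : ∀ j : Fin N, (C (a j) * X j) ^ k j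
        = C (a j ^ k j) * (X j : MvPolynomial (Fin N) ℂ) ^ k j := by
      intro j; rw [mul_pow, ← C_pow]
    simp_rw [h1]
    rw [Finset.prod_mul_distrib, ← map_prod, prod_X_pow_univ,
      C_mul_monomial, ← C_eq_coe_nat, C_mul_monomial, mul_one]
  rw [expand, coeff_sum]
  simp_rw [term_eq, coeff_monomial]
  rw [Finset.sum_eq_single (⇑m)]
  · have : Finsupp.equivFunOnFinite.symm ⇑m = m := by
      ext j; simp
    rw [if_pos this]
  · intro k _ hk
    rw [if_neg]
    intro h
    apply hk
    have := congrArg (Finsupp.equivFunOnFinite) h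
    simp at this; exact this
  · intro hmem
    exfalso
    apply hmem
    rw [Finset.mem_piAntidiag]
    exact ⟨hm, fun i _ => Finset.mem_univ i⟩

/-- The apolarity pairing with a fixed form `F`. -/
noncomputable def pairF {N : ℕ} (F : MvPolynomial (Fin N) ℂ) :
    MvPolynomial (Fin N) ℂ →ₗ[ℂ] ℂ :=
  ∑ m ∈ F.support, ((∏ j, ((m j).factorial : ℂ)) * coeff m F) • lcoeff ℂ m

lemma pairF_linForm_pow {N d : ℕ} (F : MvPolynomial (Fin N) ℂ)
    (hF : F.IsHomogeneous d) (a : Fin N → ℂ) :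
    pairF F (linForm a ^ d) = (d.factorial : ℂ) * eval a F := by
  rw [pairF, eval_eq', Finset.mul_sum]
  simp only [LinearMap.sum_apply, LinearMap.smul_apply, lcoeff_apply, smul_eq_mul]
  refine Finset.sum_congr rfl fun m hm => ?_
  have hco : coeff m F ≠ 0 := mem_support_iff.mp hm
  have hdeg : ∑ j, m j = d := by
    have h1 : Finsupp.weight 1 m = d := hF hco
    change Finsupp.weight (fun _ => 1) m = d at h1
    rw [← Finsupp.degree_eq_weight_one] at h1
    rw [← h1, Finsupp.degree]
    exact (Finset.sum_subset (Finset.subset_univ _)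
      (fun x _ hx => Finsupp.notMem_support_iff.mp hx)).symm
  rw [coeff_linForm_pow a m hdeg]
  have key : (∏ j, ((m j).factorial : ℂ)) * (Nat.multinomial Finset.univ ⇑m : ℂ)
      = (d.factorial : ℂ) := by
    have := Nat.multinomial_spec Finset.univ ⇑m
    rw [hdeg] at this
    push_cast [← this]
    ring
  calc (∏ j, ((m j).factorial : ℂ)) * coeff m F *
        ((Nat.multinomial Finset.univ ⇑m : ℂ) * ∏ j, a j ^ m j)
      = ((∏ j, ((m j).factorial : ℂ)) * (Nat.multinomial Finset.univ ⇑m : ℂ)) *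
        (coeff m F * ∏ j, a j ^ m j) := by ring
    _ = (d.factorial : ℂ) * (coeff m F * ∏ j, a j ^ m j) := by rw [key]

open scoped Classical in
lemma key_lemma {n d : ℕ} (f : MvPolynomial (Fin (n+1)) ℂ)
    (XX YY : Finset (Projectivization ℂ (Fin (n+1) → ℂ)))
    (hX : isDecomp d f XX) (hXirr : ∀ S ⊂ XX, ¬ isDecomp d f S)
    (hY : isDecomp d f YY)
    (p : Projectivization ℂ (Fin (n+1) → ℂ)) (hp : p ∈ XX)
    (F : MvPolynomial (Fin (n+1)) ℂ) (hF : F.IsHomogeneous d)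
    (hvX : ∀ q ∈ XX, q ≠ p → eval (Projectivization.rep q) F = 0)
    (hvY : ∀ q ∈ YY, eval (Projectivization.rep q) F = 0) :
    eval (Projectivization.rep p) F = 0 := by
  set v : Projectivization ℂ (Fin (n+1) → ℂ) → MvPolynomial (Fin (n+1)) ℂ :=
    fun q => (linForm q.rep) ^ d with hv
  obtain ⟨c, hcsupp, hcf⟩ := (Finsupp.mem_span_image_iff_linearCombination ℂ).mp hX
  obtain ⟨b, hbsupp, hbf⟩ := (Finsupp.mem_span_image_iff_linearCombination ℂ).mp hY
  rw [Finsupp.mem_supported] at hcsupp hbsupp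
  have hcp : c p ≠ 0 := by
    intro h0
    refine hXirr (XX.erase p) (Finset.erase_ssubset hp) ?_
    refine (Finsupp.mem_span_image_iff_linearCombination ℂ).mpr ⟨c, ?_, hcf⟩
    rw [Finsupp.mem_supported]
    intro q hq
    have hq' : q ∈ c.support := hq
    have hqX : q ∈ XX := hcsupp hq
    have hqp : q ≠ p := fun h => (Finsupp.mem_support_iff.mp hq') (h ▸ h0)
    simp [Finset.mem_coe, Finset.mem_erase, hqp, hqX]
  have hpair : ∀ (l : (Projectivization ℂ (Fin (n+1) → ℂ)) →₀ ℂ),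
      pairF F (Finsupp.linearCombination ℂ v l)
        = ∑ q ∈ l.support, l q * ((d.factorial : ℂ) * eval q.rep F) := by
    intro l
    rw [Finsupp.linearCombination_apply, Finsupp.sum, map_sum]
    refine Finset.sum_congr rfl fun q _ => ?_
    rw [map_smul, smul_eq_mul, hv]
    rw [pairF_linForm_pow F hF]
  have hXside : pairF F f = c p * ((d.factorial : ℂ) * eval p.rep F) := by
    rw [← hcf, hpair]
    by_cases hps : p ∈ c.support
    · refine Finset.sum_eq_single_of_mem p hps fun q hq hqp => ?_
      rw [hvX q (hcsupp hq) hqp]; ring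
    · exact absurd (Finsupp.notMem_support_iff.mp hps) hcp
  have hYside : pairF F f = 0 := by
    rw [← hbf, hpair]
    refine Finset.sum_eq_zero fun q hq => ?_
    rw [hvY q (hbsupp hq)]; ring
  rw [hYside] at hXside
  have hd : (d.factorial : ℂ) ≠ 0 := by
    exact_mod_cast Nat.cast_ne_zero.mpr (Nat.factorial_ne_zero d)
  rcases mul_eq_zero.mp hXside.symm with h | h
  · exact absurd h hcp
  · rcases mul_eq_zero.mp h with h' | h'
    · exact absurd h' hd
    · exact h'

open scoped Classical in
/-- If `𝕏, 𝕐` are disjoint irredundant Waring decompositions of a degree-`d` form `f`,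
then `𝕏 ∪ 𝕐` satisfies the Cayley–Bacharach property in degree `d`. -/
theorem stmt16 (n d : ℕ) (f : MvPolynomial (Fin (n+1)) ℂ) (hf : f.IsHomogeneous d)
    (XX YY : Finset (Projectivization ℂ (Fin (n+1) → ℂ))) (hdisj : Disjoint XX YY)
    (hX : isDecomp d f XX) (hXirr : ∀ S ⊂ XX, ¬ isDecomp d f S)
    (hY : isDecomp d f YY) (hYirr : ∀ S ⊂ YY, ¬ isDecomp d f S) :
    ∀ p ∈ XX ∪ YY, ∀ F : MvPolynomial (Fin (n+1)) ℂ, F.IsHomogeneous d →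
      (∀ q ∈ (XX ∪ YY).erase p, eval (Projectivization.rep q) F = 0) →
      eval (Projectivization.rep p) F = 0 := by
  intro p hp F hF hvan
  rcases Finset.mem_union.mp hp with hpX | hpY
  · refine key_lemma f XX YY hX hXirr hY p hpX F hF ?_ ?_
    · intro q hq hqp
      exact hvan q (Finset.mem_erase.mpr ⟨hqp, Finset.mem_union_left _ hq⟩)
    · intro q hq
      have hqp : q ≠ p := fun h => (Finset.disjoint_left.mp hdisj hpX) (h ▸ hq)
      exact hvan q (Finset.mem_erase.mpr ⟨hqp, Finset.mem_union_right _ hq⟩)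
  · refine key_lemma f YY XX hY hYirr hX p hpY F hF ?_ ?_
    · intro q hq hqp
      exact hvan q (Finset.mem_erase.mpr ⟨hqp, Finset.mem_union_right _ hq⟩)
    · intro q hq
      have hqp : q ≠ p := fun h => (Finset.disjoint_left.mp hdisj hq) (h ▸ hpY)
      exact hvan q (Finset.mem_erase.mpr ⟨hqp, Finset.mem_union_left _ hq⟩)
end
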